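/- arXiv:0807.3895 — 6 statements merged into one kernel-verified Lean document; each statement's English description precedes it below -/
import Mathlib

section
/- For any nonnegative integer m and complex numbers λ₁, λ₂ with λ₁ ≠ λ₂, the function Ψ(x₁,x₂) = (λ₁−λ₂)^{−m} · (D − 2m/(x₁−x₂))(D − 2(m−1)/(x₁−x₂))⋯(D − 2/(x₁−x₂)) exp(λ₁x₁+λ₂x₂), where D = ∂/∂x₁ − ∂/∂x₂, satisfies the Schrödinger equation (−∂²/∂x₁² − ∂²/∂x₂² + 2m(m+1)/(x₁−x₂)²) Ψ = −(λ₁²+λ₂²) Ψ on the region x₁ ≠ x₂. -/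
open Complex Finset

/-- The operator `D = ∂/∂x₁ - ∂/∂x₂` acting on functions of two complex variables. -/
noncomputable def Dop (f : ℂ → ℂ → ℂ) : ℂ → ℂ → ℂ :=
  fun x₁ x₂ => deriv (fun s => f s x₂) x₁ - deriv (fun s => f x₁ s) x₂

/-- `BAfac lam₁ lam₂ k = (D - 2k/(x₁-x₂)) ⋯ (D - 2/(x₁-x₂)) exp(λ₁x₁+λ₂x₂)`,
the product of first-order factors applied left to right (the factor with the
smallest coefficient acting first on the exponential). -/
noncomputable def BAfac (lam₁ lam₂ : ℂ) : ℕ → (ℂ → ℂ → ℂ)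
  | 0 => fun x₁ x₂ => Complex.exp (lam₁ * x₁ + lam₂ * x₂)
  | (k+1) => fun x₁ x₂ =>
      Dop (BAfac lam₁ lam₂ k) x₁ x₂
        - (2 * ((k : ℂ) + 1) / (x₁ - x₂)) * BAfac lam₁ lam₂ k x₁ x₂

/-- The two-particle rational Baker–Akhiezer function
`Ψ^{(2)}_m = (λ₁-λ₂)^{-m} (D - 2m/(x₁-x₂))⋯(D - 2/(x₁-x₂)) exp(λ₁x₁+λ₂x₂)`. -/
noncomputable def Psi2 (m : ℕ) (lam₁ lam₂ : ℂ) : ℂ → ℂ → ℂ :=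
  fun x₁ x₂ => (lam₁ - lam₂) ^ (-(m : ℤ)) * BAfac lam₁ lam₂ m x₁ x₂

noncomputable def aa (μ : ℂ) : ℕ → ℕ → ℂ
  | 0, 0 => 1
  | 0, _+1 => 0
  | k+1, 0 => μ * aa μ k 0
  | k+1, j+1 => μ * aa μ k (j+1) - 2*((k:ℂ)+1+(j:ℂ)) * aa μ k j

lemma aa_vanish (μ : ℂ) : ∀ k j, k < j → aa μ k j = 0 := by
  intro k
  induction k with
  | zero => intro j hj; match j, hj with
            | j+1, _ => simp [aa]
  | succ k ih =>
      intro j hj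
      match j, hj with
      | j+1, hj =>
        have h1 : k < j + 1 := by omega
        have h2 : k < j := by omega
        simp [aa, ih _ h1, ih _ h2]

lemma aa_ode (μ : ℂ) (m : ℕ) : ∀ j : ℕ,
    ((j:ℂ)+1) * μ * aa μ m (j+1) = ((j:ℂ)*((j:ℂ)+1) - (m:ℂ)*((m:ℂ)+1)) * aa μ m j := by
  induction m with
  | zero =>
      intro j
      match j with
      | 0 => simp [aa]
      | j+1 => simp [aa]
  | succ m ih =>
      intro j
      match j with
      | 0 =>
          have h0 := ih 0
          simp only [aa]
          push_cast
          push_cast at h0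
          linear_combination μ * h0
      | j+1 =>
          have h1 := ih (j+1)
          have h2 := ih j
          have hne : ((j:ℂ)+1) ≠ 0 := by
            exact Nat.cast_add_one_ne_zero j
          apply mul_left_cancel₀ hne
          simp only [aa]
          push_cast
          push_cast at h1 h2
          linear_combination (((j:ℂ)+1)*μ) * h1 + (2*((m:ℂ)+1) - 2*((j:ℂ)+2)*((m:ℂ)+(j:ℂ)+2)) * h2

noncomputable def ff (μ : ℂ) (k : ℕ) (z : ℂ) : ℂ :=
  ∑ j ∈ range (k+1), aa μ k j * z ^ (-(j:ℤ))

noncomputable def fd (μ : ℂ) (k : ℕ) (z : ℂ) : ℂ :=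
  ∑ j ∈ range (k+1), aa μ k j * (-(j:ℂ)) * z ^ (-(j:ℤ)-1)

noncomputable def fdd (μ : ℂ) (k : ℕ) (z : ℂ) : ℂ :=
  ∑ j ∈ range (k+1), aa μ k j * (-(j:ℂ)) * (-(j:ℂ)-1) * z ^ (-(j:ℤ)-2)

lemma hasDerivAt_ff (μ : ℂ) (k : ℕ) {z : ℂ} (hz : z ≠ 0) :
    HasDerivAt (ff μ k) (fd μ k z) z := by
  have h : HasDerivAt (ff μ k)
      (∑ j ∈ range (k+1), aa μ k j * ((Int.cast (-(j:ℤ)) : ℂ) * z ^ (-(j:ℤ)-1))) z :=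
    HasDerivAt.fun_sum fun j _ =>
      HasDerivAt.const_mul (aa μ k j) (hasDerivAt_zpow (-(j:ℤ)) z (Or.inl hz))
  have he : (∑ j ∈ range (k+1), aa μ k j * ((Int.cast (-(j:ℤ)) : ℂ) * z ^ (-(j:ℤ)-1)))
      = fd μ k z := by
    unfold fd; apply sum_congr rfl; intro j _; push_cast; ring
  rw [he] at h
  exact h

lemma hasDerivAt_fd (μ : ℂ) (k : ℕ) {z : ℂ} (hz : z ≠ 0) :
    HasDerivAt (fd μ k) (fdd μ k z) z := by
  have h : HasDerivAt (fd μ k)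
      (∑ j ∈ range (k+1), (aa μ k j * (-(j:ℂ))) * ((Int.cast (-(j:ℤ)-1) : ℂ) * z ^ (-(j:ℤ)-1-1))) z :=
    HasDerivAt.fun_sum fun j _ =>
      HasDerivAt.const_mul (aa μ k j * (-(j:ℂ))) (hasDerivAt_zpow (-(j:ℤ)-1) z (Or.inl hz))
  have he : (∑ j ∈ range (k+1), (aa μ k j * (-(j:ℂ))) * ((Int.cast (-(j:ℤ)-1) : ℂ) * z ^ (-(j:ℤ)-1-1)))
      = fdd μ k z := by
    unfold fdd; apply sum_congr rfl; intro j _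
    have h2 : (-(j:ℤ)-1-1) = (-(j:ℤ)-2) := by ring
    rw [h2]; push_cast; ring
  rw [he] at h
  exact h

lemma ff_rec (μ : ℂ) (k : ℕ) {z : ℂ} (hz : z ≠ 0) :
    ff μ (k+1) z = μ * ff μ k z + 2 * fd μ k z - 2*((k:ℂ)+1)/z * ff μ k z := by
  have e1 : μ * ff μ k z = ∑ j ∈ range (k+1+1), μ * aa μ k j * z ^ (-(j:ℤ)) := by
    rw [sum_range_succ, aa_vanish μ k (k+1) (Nat.lt_succ_self k)]
    unfold ff; rw [mul_sum]
    simp [mul_assoc]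
  have e2 : ∑ j ∈ range (k+1+1), (aa μ (k+1) j - μ * aa μ k j) * z ^ (-(j:ℤ))
      = ∑ j ∈ range (k+1), (2*(-(j:ℂ)) - 2*((k:ℂ)+1)) * aa μ k j * z ^ (-(j:ℤ)-1) := by
    rw [Finset.sum_range_succ']
    have h0 : (aa μ (k+1) 0 - μ * aa μ k 0) * (z:ℂ) ^ (-((0:ℕ):ℤ)) = 0 := by simp [aa]
    rw [h0, add_zero]
    apply sum_congr rfl; intro j _
    have hcast : (-((j:ℕ)+1:ℕ):ℤ) = -(j:ℤ)-1 := by push_cast; ring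
    rw [hcast]
    simp only [aa]
    push_cast
    ring
  have hsub : ff μ (k+1) z - μ * ff μ k z
      = ∑ j ∈ range (k+1), (2*(-(j:ℂ)) - 2*((k:ℂ)+1)) * aa μ k j * z ^ (-(j:ℤ)-1) := by
    rw [e1]; unfold ff
    rw [← Finset.sum_sub_distrib]
    rw [← e2]
    apply sum_congr rfl; intro j _; ring
  have e3 : 2 * fd μ k z = ∑ j ∈ range (k+1), 2 * (aa μ k j * (-(j:ℂ))) * z ^ (-(j:ℤ)-1) := by
    unfold fd; rw [mul_sum]; apply sum_congr rfl; intro j _; ring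
  have e4 : 2*((k:ℂ)+1)/z * ff μ k z
      = ∑ j ∈ range (k+1), 2*((k:ℂ)+1) * aa μ k j * z ^ (-(j:ℤ)-1) := by
    unfold ff; rw [mul_sum]; apply sum_congr rfl; intro j _
    rw [zpow_sub_one₀ hz]
    ring
  rw [e3, e4]
  have e5 : (∑ j ∈ range (k+1), 2 * (aa μ k j * (-(j:ℂ))) * z ^ (-(j:ℤ)-1))
        - ∑ j ∈ range (k+1), 2*((k:ℂ)+1) * aa μ k j * z ^ (-(j:ℤ)-1)
      = ff μ (k+1) z - μ * ff μ k z := by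
    rw [hsub, ← Finset.sum_sub_distrib]
    apply sum_congr rfl; intro j _; ring
  linear_combination -e5

lemma ff_ode (μ : ℂ) (m : ℕ) {z : ℂ} (hz : z ≠ 0) :
    fdd μ m z + μ * fd μ m z - (m:ℂ)*((m:ℂ)+1)/z^2 * ff μ m z = 0 := by
  have eA : fdd μ m z - (m:ℂ)*((m:ℂ)+1)/z^2 * ff μ m z
      = ∑ j ∈ range m, ((j:ℂ)*((j:ℂ)+1) - (m:ℂ)*((m:ℂ)+1)) * aa μ m j * z ^ (-(j:ℤ)-2) := by
    have h1 : fdd μ m z - (m:ℂ)*((m:ℂ)+1)/z^2 * ff μ m z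
        = ∑ j ∈ range (m+1), ((j:ℂ)*((j:ℂ)+1) - (m:ℂ)*((m:ℂ)+1)) * aa μ m j * z ^ (-(j:ℤ)-2) := by
      unfold fdd ff; rw [mul_sum, ← Finset.sum_sub_distrib]
      apply sum_congr rfl; intro j _
      have hzz : z ^ (-(j:ℤ)) = z ^ (-(j:ℤ)-2) * z ^ (2:ℕ) := by
        rw [← zpow_natCast z 2, ← zpow_add₀ hz]; norm_num
      rw [hzz]; field_simp; ring
    rw [h1, sum_range_succ]
    simp
  have eB : μ * fd μ m z
      = ∑ j ∈ range m, (-(((j:ℂ)+1) * μ * aa μ m (j+1))) * z ^ (-(j:ℤ)-2) := by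
    unfold fd; rw [mul_sum, Finset.sum_range_succ']
    have h0 : μ * (aa μ m 0 * (-((0:ℕ):ℂ)) * z ^ (-((0:ℕ):ℤ)-1)) = 0 := by simp
    rw [h0, add_zero]
    apply sum_congr rfl; intro j _
    have hcast : (-(((j:ℕ)+1:ℕ)):ℤ) - 1 = -(j:ℤ)-2 := by push_cast; ring
    rw [hcast]
    push_cast
    ring
  have hsum : (∑ j ∈ range m, ((j:ℂ)*((j:ℂ)+1) - (m:ℂ)*((m:ℂ)+1)) * aa μ m j * z ^ (-(j:ℤ)-2))
      + (∑ j ∈ range m, (-(((j:ℂ)+1) * μ * aa μ m (j+1))) * z ^ (-(j:ℤ)-2)) = 0 := by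
    rw [← Finset.sum_add_distrib]
    apply Finset.sum_eq_zero; intro j _
    have h := aa_ode μ m j
    linear_combination (-(z ^ (-(j:ℤ)-2))) * h
  linear_combination eA + eB + hsum

lemma hasDerivAt_prod₁ (lam₁ lam₂ : ℂ) (g gd : ℂ → ℂ)
    (hg : ∀ z : ℂ, z ≠ 0 → HasDerivAt g (gd z) z)
    (x₁ x₂ : ℂ) (hx : x₁ ≠ x₂) :
    HasDerivAt (fun s => Complex.exp (lam₁*s + lam₂*x₂) * g (s - x₂))
      (lam₁ * (Complex.exp (lam₁*x₁ + lam₂*x₂) * g (x₁-x₂))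
        + Complex.exp (lam₁*x₁+lam₂*x₂) * gd (x₁-x₂)) x₁ := by
  have hz : x₁ - x₂ ≠ 0 := sub_ne_zero.mpr hx
  have h1 : HasDerivAt (fun s : ℂ => Complex.exp (lam₁*s + lam₂*x₂))
      (Complex.exp (lam₁*x₁+lam₂*x₂) * lam₁) x₁ := by
    have h0 : HasDerivAt (fun s : ℂ => lam₁*s + lam₂*x₂) lam₁ x₁ := by
      simpa using ((hasDerivAt_id x₁).const_mul lam₁).add_const (lam₂*x₂)
    simpa using h0.cexp
  have h2 : HasDerivAt (fun s : ℂ => g (s - x₂)) (gd (x₁-x₂)) x₁ := by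
    have hsub : HasDerivAt (fun s : ℂ => s - x₂) 1 x₁ := (hasDerivAt_id x₁).sub_const x₂
    simpa [Function.comp_def] using (hg _ hz).comp x₁ hsub
  have h3 := h1.fun_mul h2
  exact h3.congr_deriv (by ring)

lemma hasDerivAt_prod₂ (lam₁ lam₂ : ℂ) (g gd : ℂ → ℂ)
    (hg : ∀ z : ℂ, z ≠ 0 → HasDerivAt g (gd z) z)
    (x₁ x₂ : ℂ) (hx : x₁ ≠ x₂) :
    HasDerivAt (fun s => Complex.exp (lam₁*x₁ + lam₂*s) * g (x₁ - s))
      (lam₂ * (Complex.exp (lam₁*x₁ + lam₂*x₂) * g (x₁-x₂))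
        - Complex.exp (lam₁*x₁+lam₂*x₂) * gd (x₁-x₂)) x₂ := by
  have hz : x₁ - x₂ ≠ 0 := sub_ne_zero.mpr hx
  have h1 : HasDerivAt (fun s : ℂ => Complex.exp (lam₁*x₁ + lam₂*s))
      (Complex.exp (lam₁*x₁+lam₂*x₂) * lam₂) x₂ := by
    have h0 : HasDerivAt (fun s : ℂ => lam₁*x₁ + lam₂*s) lam₂ x₂ := by
      simpa using (((hasDerivAt_id x₂).const_mul lam₂).const_add (lam₁*x₁))
    simpa using h0.cexp
  have h2 : HasDerivAt (fun s : ℂ => g (x₁ - s)) (-(gd (x₁-x₂))) x₂ := by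
    have hsub : HasDerivAt (fun s : ℂ => x₁ - s) (-1) x₂ := by
      simpa using (hasDerivAt_id x₂).const_sub x₁
    have := (hg _ hz).comp x₂ hsub
    simpa [Function.comp_def] using this
  have h3 := h1.fun_mul h2
  exact h3.congr_deriv (by ring)

lemma BAfac_eq (lam₁ lam₂ : ℂ) : ∀ (k : ℕ) (x₁ x₂ : ℂ), x₁ ≠ x₂ →
    BAfac lam₁ lam₂ k x₁ x₂
      = Complex.exp (lam₁*x₁+lam₂*x₂) * ff (lam₁-lam₂) k (x₁-x₂) := by
  intro k
  induction k with
  | zero =>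
      intro x₁ x₂ hx
      simp [BAfac, ff, aa]
  | succ k ih =>
      intro x₁ x₂ hx
      have hz : x₁ - x₂ ≠ 0 := sub_ne_zero.mpr hx
      have hev1 : (fun s => BAfac lam₁ lam₂ k s x₂)
          =ᶠ[nhds x₁] (fun s => Complex.exp (lam₁*s+lam₂*x₂) * ff (lam₁-lam₂) k (s-x₂)) := by
        filter_upwards [isOpen_compl_singleton.mem_nhds
          (show x₁ ∈ ({x₂}ᶜ : Set ℂ) from hx)] with s hs
        exact ih s x₂ hs
      have hev2 : (fun s => BAfac lam₁ lam₂ k x₁ s)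
          =ᶠ[nhds x₂] (fun s => Complex.exp (lam₁*x₁+lam₂*s) * ff (lam₁-lam₂) k (x₁-s)) := by
        filter_upwards [isOpen_compl_singleton.mem_nhds
          (show x₂ ∈ ({x₁}ᶜ : Set ℂ) from Ne.symm hx)] with s hs
        exact ih x₁ s (Ne.symm hs)
      have d1 : deriv (fun s => BAfac lam₁ lam₂ k s x₂) x₁
          = lam₁ * (Complex.exp (lam₁*x₁ + lam₂*x₂) * ff (lam₁-lam₂) k (x₁-x₂))
            + Complex.exp (lam₁*x₁+lam₂*x₂) * fd (lam₁-lam₂) k (x₁-x₂) := by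
        rw [hev1.deriv_eq]
        exact (hasDerivAt_prod₁ lam₁ lam₂ _ _
          (fun z hz => hasDerivAt_ff (lam₁-lam₂) k hz) x₁ x₂ hx).deriv
      have d2 : deriv (fun s => BAfac lam₁ lam₂ k x₁ s) x₂
          = lam₂ * (Complex.exp (lam₁*x₁ + lam₂*x₂) * ff (lam₁-lam₂) k (x₁-x₂))
            - Complex.exp (lam₁*x₁+lam₂*x₂) * fd (lam₁-lam₂) k (x₁-x₂) := by
        rw [hev2.deriv_eq]
        exact (hasDerivAt_prod₂ lam₁ lam₂ _ _
          (fun z hz => hasDerivAt_ff (lam₁-lam₂) k hz) x₁ x₂ hx).deriv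
      show Dop (BAfac lam₁ lam₂ k) x₁ x₂
          - (2 * ((k : ℂ) + 1) / (x₁ - x₂)) * BAfac lam₁ lam₂ k x₁ x₂ = _
      rw [Dop, d1, d2, ih x₁ x₂ hx, ff_rec (lam₁-lam₂) k hz]
      ring

lemma Psi2_eq (m : ℕ) (lam₁ lam₂ x₁ x₂ : ℂ) (hx : x₁ ≠ x₂) :
    Psi2 m lam₁ lam₂ x₁ x₂ = (lam₁ - lam₂) ^ (-(m : ℤ))
      * (Complex.exp (lam₁*x₁+lam₂*x₂) * ff (lam₁-lam₂) m (x₁-x₂)) := by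
  unfold Psi2; rw [BAfac_eq lam₁ lam₂ m x₁ x₂ hx]

lemma psi_d1 (m : ℕ) (lam₁ lam₂ x₁ x₂ : ℂ) (hx : x₁ ≠ x₂) :
    deriv (fun s => Psi2 m lam₁ lam₂ s x₂) x₁
      = (lam₁ - lam₂) ^ (-(m : ℤ)) *
        (lam₁ * (Complex.exp (lam₁*x₁ + lam₂*x₂) * ff (lam₁-lam₂) m (x₁-x₂))
          + Complex.exp (lam₁*x₁+lam₂*x₂) * fd (lam₁-lam₂) m (x₁-x₂)) := by
  have hev : (fun s => Psi2 m lam₁ lam₂ s x₂)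
      =ᶠ[nhds x₁] (fun s => (lam₁ - lam₂) ^ (-(m : ℤ))
        * (Complex.exp (lam₁*s+lam₂*x₂) * ff (lam₁-lam₂) m (s-x₂))) := by
    filter_upwards [isOpen_compl_singleton.mem_nhds
      (show x₁ ∈ ({x₂}ᶜ : Set ℂ) from hx)] with s hs
    exact Psi2_eq m lam₁ lam₂ s x₂ hs
  rw [hev.deriv_eq]
  exact (HasDerivAt.const_mul _ (hasDerivAt_prod₁ lam₁ lam₂ _ _
    (fun z hz => hasDerivAt_ff (lam₁-lam₂) m hz) x₁ x₂ hx)).deriv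

lemma psi_d2 (m : ℕ) (lam₁ lam₂ x₁ x₂ : ℂ) (hx : x₁ ≠ x₂) :
    deriv (fun s => Psi2 m lam₁ lam₂ x₁ s) x₂
      = (lam₁ - lam₂) ^ (-(m : ℤ)) *
        (lam₂ * (Complex.exp (lam₁*x₁ + lam₂*x₂) * ff (lam₁-lam₂) m (x₁-x₂))
          - Complex.exp (lam₁*x₁+lam₂*x₂) * fd (lam₁-lam₂) m (x₁-x₂)) := by
  have hev : (fun s => Psi2 m lam₁ lam₂ x₁ s)
      =ᶠ[nhds x₂] (fun s => (lam₁ - lam₂) ^ (-(m : ℤ))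
        * (Complex.exp (lam₁*x₁+lam₂*s) * ff (lam₁-lam₂) m (x₁-s))) := by
    filter_upwards [isOpen_compl_singleton.mem_nhds
      (show x₂ ∈ ({x₁}ᶜ : Set ℂ) from Ne.symm hx)] with s hs
    exact Psi2_eq m lam₁ lam₂ x₁ s (Ne.symm hs)
  rw [hev.deriv_eq]
  exact (HasDerivAt.const_mul _ (hasDerivAt_prod₂ lam₁ lam₂ _ _
    (fun z hz => hasDerivAt_ff (lam₁-lam₂) m hz) x₁ x₂ hx)).deriv

lemma psi_dd1 (m : ℕ) (lam₁ lam₂ x₁ x₂ : ℂ) (hx : x₁ ≠ x₂) :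
    deriv (deriv (fun s => Psi2 m lam₁ lam₂ s x₂)) x₁
      = (lam₁ - lam₂) ^ (-(m : ℤ)) *
        ((lam₁ * (lam₁ * (Complex.exp (lam₁*x₁ + lam₂*x₂) * ff (lam₁-lam₂) m (x₁-x₂))
            + Complex.exp (lam₁*x₁+lam₂*x₂) * fd (lam₁-lam₂) m (x₁-x₂)))
          + (lam₁ * (Complex.exp (lam₁*x₁ + lam₂*x₂) * fd (lam₁-lam₂) m (x₁-x₂))
            + Complex.exp (lam₁*x₁+lam₂*x₂) * fdd (lam₁-lam₂) m (x₁-x₂))) := by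
  have hev : deriv (fun s => Psi2 m lam₁ lam₂ s x₂)
      =ᶠ[nhds x₁] (fun s => (lam₁ - lam₂) ^ (-(m : ℤ)) *
        (lam₁ * (Complex.exp (lam₁*s + lam₂*x₂) * ff (lam₁-lam₂) m (s-x₂))
          + Complex.exp (lam₁*s+lam₂*x₂) * fd (lam₁-lam₂) m (s-x₂))) := by
    filter_upwards [isOpen_compl_singleton.mem_nhds
      (show x₁ ∈ ({x₂}ᶜ : Set ℂ) from hx)] with s hs
    exact psi_d1 m lam₁ lam₂ s x₂ hs
  rw [hev.deriv_eq]
  have hff := hasDerivAt_prod₁ lam₁ lam₂ _ _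
    (fun z hz => hasDerivAt_ff (lam₁-lam₂) m hz) x₁ x₂ hx
  have hfd := hasDerivAt_prod₁ lam₁ lam₂ _ _
    (fun z hz => hasDerivAt_fd (lam₁-lam₂) m hz) x₁ x₂ hx
  exact (HasDerivAt.const_mul _ ((hff.const_mul lam₁).add hfd)).deriv

lemma psi_dd2 (m : ℕ) (lam₁ lam₂ x₁ x₂ : ℂ) (hx : x₁ ≠ x₂) :
    deriv (deriv (fun s => Psi2 m lam₁ lam₂ x₁ s)) x₂
      = (lam₁ - lam₂) ^ (-(m : ℤ)) *
        ((lam₂ * (lam₂ * (Complex.exp (lam₁*x₁ + lam₂*x₂) * ff (lam₁-lam₂) m (x₁-x₂))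
            - Complex.exp (lam₁*x₁+lam₂*x₂) * fd (lam₁-lam₂) m (x₁-x₂)))
          - (lam₂ * (Complex.exp (lam₁*x₁ + lam₂*x₂) * fd (lam₁-lam₂) m (x₁-x₂))
            - Complex.exp (lam₁*x₁+lam₂*x₂) * fdd (lam₁-lam₂) m (x₁-x₂))) := by
  have hev : deriv (fun s => Psi2 m lam₁ lam₂ x₁ s)
      =ᶠ[nhds x₂] (fun s => (lam₁ - lam₂) ^ (-(m : ℤ)) *
        (lam₂ * (Complex.exp (lam₁*x₁ + lam₂*s) * ff (lam₁-lam₂) m (x₁-s))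
          - Complex.exp (lam₁*x₁+lam₂*s) * fd (lam₁-lam₂) m (x₁-s))) := by
    filter_upwards [isOpen_compl_singleton.mem_nhds
      (show x₂ ∈ ({x₁}ᶜ : Set ℂ) from Ne.symm hx)] with s hs
    exact psi_d2 m lam₁ lam₂ x₁ s (Ne.symm hs)
  rw [hev.deriv_eq]
  have hff := hasDerivAt_prod₂ lam₁ lam₂ _ _
    (fun z hz => hasDerivAt_ff (lam₁-lam₂) m hz) x₁ x₂ hx
  have hfd := hasDerivAt_prod₂ lam₁ lam₂ _ _
    (fun z hz => hasDerivAt_fd (lam₁-lam₂) m hz) x₁ x₂ hx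
  exact (HasDerivAt.const_mul _ ((hff.const_mul lam₂).sub hfd)).deriv

theorem schroedinger_eq_Psi2 (m : ℕ) (lam₁ lam₂ : ℂ) (hl : lam₁ ≠ lam₂)
    (x₁ x₂ : ℂ) (hx : x₁ ≠ x₂) :
    -(deriv (deriv (fun s => Psi2 m lam₁ lam₂ s x₂)) x₁)
      - deriv (deriv (fun s => Psi2 m lam₁ lam₂ x₁ s)) x₂
      + (2 * (m : ℂ) * ((m : ℂ) + 1) / (x₁ - x₂) ^ 2) * Psi2 m lam₁ lam₂ x₁ x₂
    = -(lam₁ ^ 2 + lam₂ ^ 2) * Psi2 m lam₁ lam₂ x₁ x₂ := by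
  have hz : x₁ - x₂ ≠ 0 := sub_ne_zero.mpr hx
  rw [psi_dd1 m lam₁ lam₂ x₁ x₂ hx, psi_dd2 m lam₁ lam₂ x₁ x₂ hx,
    Psi2_eq m lam₁ lam₂ x₁ x₂ hx]
  have hode := ff_ode (lam₁-lam₂) m hz
  linear_combination (-2 * ((lam₁ - lam₂) ^ (-(m : ℤ)))
    * Complex.exp (lam₁*x₁+lam₂*x₂)) * hode
end

section
/- Let N be a positive integer, β a complex parameter, m₁,…,m_N nonzero complex numbers, and set γ_{jk} = (m_j + m_k)β(m_j m_k β − 1). Then the function Φ₀(x) = ∏_{i<j} sinh(x_i − x_j)^{β m_i m_j} satisfies H Φ₀ = E₀ Φ₀, where H = −∑_{j=1}^N (1/m_j) ∂²/∂x_j² + ∑_{j<k} γ_{jk}/sinh²(x_j − x_k) and E₀ = −(β²/3)·((∑_j m_j)³ − ∑_j m_j³), on the domain where all x_i − x_j (i<j) are nonzero and a branch of the power is fixed. -/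
open Complex Finset

noncomputable def co (r : ℝ) : ℝ := Real.cosh r / Real.sinh r

lemma co_neg (r : ℝ) : co (-r) = - co r := by
  simp [co, Real.cosh_neg, Real.sinh_neg, div_neg]

lemma hasDerivAt_co {r : ℝ} (h : Real.sinh r ≠ 0) :
    HasDerivAt co (1 - co r ^ 2) r := by
  have := (Real.hasDerivAt_cosh r).div (Real.hasDerivAt_sinh r) h
  refine this.congr_deriv ?_
  have h2 := Real.cosh_sq_sub_sinh_sq r
  simp only [co]
  field_simp

lemma hasDerivAt_prodlog {ι : Type*} [DecidableEq ι] (s : Finset ι) (q : ι → ℝ → ℂ)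
    (ℓ : ι → ℂ) (t : ℝ) (h : ∀ i ∈ s, HasDerivAt (q i) (q i t * ℓ i) t) :
    HasDerivAt (fun u => ∏ i ∈ s, q i u) ((∏ i ∈ s, q i t) * ∑ i ∈ s, ℓ i) t := by
  induction s using Finset.induction with
  | empty => simpa using hasDerivAt_const t (1 : ℂ)
  | insert a s' ha ih =>
    have h1 : HasDerivAt (q a) (q a t * ℓ a) t := h a (mem_insert_self a s')
    have h2 := ih (fun i hi => h i (mem_insert_of_mem hi))
    have h3 := h1.mul h2
    have key : HasDerivAt (fun u => q a u * ∏ i ∈ s', q i u)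
        ((∏ i ∈ insert a s', q i t) * ∑ i ∈ insert a s', ℓ i) t := by
      refine h3.congr_deriv ?_
      rw [prod_insert ha, sum_insert ha]; ring
    refine key.congr_of_eventuallyEq ?_
    filter_upwards with u
    rw [prod_insert ha]

lemma hasDerivAt_cpow_pos {h : ℝ → ℝ} {h' t : ℝ} (hh : HasDerivAt h h' t)
    (hpos : 0 < h t) (c : ℂ) :
    HasDerivAt (fun s => ((h s : ℝ) : ℂ) ^ c)
      (((h t : ℝ) : ℂ) ^ c * (c * ((h' / h t : ℝ) : ℂ))) t := by
  have hz : ((h t : ℝ) : ℂ) ≠ 0 := by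
    simp only [ne_eq, Complex.ofReal_eq_zero]; exact ne_of_gt hpos
  have hsp : ((h t : ℝ) : ℂ) ∈ Complex.slitPlane := Complex.ofReal_mem_slitPlane.2 hpos
  have base := hh.ofReal_comp
  have key : HasDerivAt (fun s => ((h s : ℝ) : ℂ) ^ c)
      (c * ((h t : ℝ) : ℂ) ^ (c - 1) * (h' : ℂ)) t :=
    HasDerivAt.comp (h₂ := fun z : ℂ => z ^ c) t (Complex.hasStrictDerivAt_cpow_const hsp).hasDerivAt base
  refine key.congr_deriv ?_
  rw [Complex.cpow_sub _ _ hz, Complex.cpow_one]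
  push_cast
  field_simp

lemma factor1 (a t : ℝ) (c : ℂ) (h : 0 < Real.sinh (t - a)) :
    HasDerivAt (fun s => ((Real.sinh (s - a) : ℝ) : ℂ) ^ c)
      (((Real.sinh (t - a) : ℝ) : ℂ) ^ c * (c * ((co (t - a) : ℝ) : ℂ))) t := by
  have hh : HasDerivAt (fun s => Real.sinh (s - a)) (Real.cosh (t - a)) t := by
    have h1 : HasDerivAt (fun s : ℝ => s - a) 1 t := (hasDerivAt_id t).sub_const a
    simpa [Function.comp_def] using (Real.hasDerivAt_sinh (t - a)).comp t h1
  have := hasDerivAt_cpow_pos hh h c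
  convert this using 3
  rfl

lemma factor2 (a t : ℝ) (c : ℂ) (h : 0 < Real.sinh (a - t)) :
    HasDerivAt (fun s => ((Real.sinh (a - s) : ℝ) : ℂ) ^ c)
      (((Real.sinh (a - t) : ℝ) : ℂ) ^ c * (c * ((co (t - a) : ℝ) : ℂ))) t := by
  have hh : HasDerivAt (fun s => Real.sinh (a - s)) (-Real.cosh (a - t)) t := by
    have h1 : HasDerivAt (fun s : ℝ => a - s) (-1) t := by simpa using (hasDerivAt_id t).const_sub a
    simpa [Function.comp_def] using (Real.hasDerivAt_sinh (a - t)).comp t h1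
  have := hasDerivAt_cpow_pos hh h c
  convert this using 3
  have : co (t - a) = -Real.cosh (a - t) / Real.sinh (a - t) := by
    rw [show t - a = -(a - t) by ring, co_neg]
    unfold co
    ring
  rw [this]

lemma erase_split (N : ℕ) (j : Fin N) (f : Fin N → ℂ) :
    ∑ i ∈ Finset.univ.erase j, f i = ∑ i ∈ Finset.Iio j, f i + ∑ i ∈ Finset.Ioi j, f i := by
  have h1 : (Finset.univ.erase j : Finset (Fin N)) = Finset.Iio j ∪ Finset.Ioi j := by
    ext k
    simp only [Finset.mem_erase, Finset.mem_univ, and_true, Finset.mem_union,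
      Finset.mem_Iio, Finset.mem_Ioi]
    constructor
    · intro h; rcases lt_or_gt_of_ne h with h' | h'
      · exact Or.inl h'
      · exact Or.inr h'
    · rintro (h | h)
      · exact ne_of_lt h
      · exact ne_of_gt h
  rw [h1, Finset.sum_union]
  exact Finset.disjoint_left.2 fun k hk hk' =>
    lt_asymm (Finset.mem_Iio.1 hk) (Finset.mem_Ioi.1 hk')

lemma lemA (N : ℕ) (β : ℂ) (mass : Fin N → ℂ) (x : Fin N → ℝ)
    (hx : ∀ i j : Fin N, i < j → x j < x i)
    (Φ : (Fin N → ℝ) → ℂ)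
    (hΦ : Φ = fun y => ∏ i : Fin N, ∏ k ∈ Finset.Ioi i,
        ((Real.sinh (y i - y k) : ℝ) : ℂ) ^ (β * mass i * mass k))
    (j : Fin N) :
    deriv (deriv (fun s => Φ (Function.update x j s))) (x j)
    = Φ x *
      ((∑ i ∈ Finset.univ.erase j, β * mass j * mass i * ((co (x j - x i) : ℝ) : ℂ)) ^ 2
        + ∑ i ∈ Finset.univ.erase j, β * mass j * mass i * ((1 - co (x j - x i) ^ 2 : ℝ) : ℂ)) := by
  subst hΦ
  -- the open chamber around x j
  set U : Set ℝ := ⋂ i ∈ Finset.univ.erase j,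
      (if i < j then Set.Iio (x i) else Set.Ioi (x i)) with hU
  have hUopen : IsOpen U := isOpen_biInter_finset fun i _ => by
    split
    · exact isOpen_Iio
    · exact isOpen_Ioi
  have hmemU : ∀ s : ℝ, s ∈ U ↔ ∀ i ∈ Finset.univ.erase j,
      s ∈ (if i < j then Set.Iio (x i) else Set.Ioi (x i)) := by
    intro s; rw [hU]; exact Set.mem_iInter₂
  have hU1 : ∀ s ∈ U, ∀ i : Fin N, i < j → s < x i := by
    intro s hs i hij
    have := (hmemU s).1 hs i (Finset.mem_erase.2 ⟨ne_of_lt hij, Finset.mem_univ i⟩)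
    rwa [if_pos hij, Set.mem_Iio] at this
  have hU2 : ∀ s ∈ U, ∀ i : Fin N, j < i → x i < s := by
    intro s hs i hij
    have := (hmemU s).1 hs i (Finset.mem_erase.2 ⟨ne_of_gt hij, Finset.mem_univ i⟩)
    rwa [if_neg (not_lt_of_gt hij), Set.mem_Ioi] at this
  have hxj : x j ∈ U := by
    rw [hmemU]
    intro i hi
    rcases lt_or_gt_of_ne (Finset.mem_erase.1 hi).1 with h' | h'
    · rw [if_pos h', Set.mem_Iio]; exact hx i j h'
    · rw [if_neg (not_lt_of_gt h'), Set.mem_Ioi]; exact hx j i h'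
  -- the three pieces
  set A : ℝ → ℂ := fun s => ∏ i ∈ Finset.Iio j,
      ((Real.sinh (x i - s) : ℝ) : ℂ) ^ (β * mass i * mass j) with hA
  set B : ℝ → ℂ := fun s => ∏ k ∈ Finset.Ioi j,
      ((Real.sinh (s - x k) : ℝ) : ℂ) ^ (β * mass j * mass k) with hB
  set C : ℂ := ∏ i ∈ Finset.univ.erase j, ∏ k ∈ (Finset.Ioi i).erase j,
      ((Real.sinh (x i - x k) : ℝ) : ℂ) ^ (β * mass i * mass k) with hC
  -- factorization
  have key : ∀ s : ℝ, (∏ i : Fin N, ∏ k ∈ Finset.Ioi i,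
      ((Real.sinh (Function.update x j s i - Function.update x j s k) : ℝ) : ℂ)
        ^ (β * mass i * mass k)) = C * (A s * B s) := by
    intro s
    have hupd : ∀ i : Fin N, i ≠ j → Function.update x j s i = x i :=
      fun i hi => Function.update_of_ne hi s x
    have hupdj : Function.update x j s j = s := Function.update_self j s x
    rw [← Finset.mul_prod_erase Finset.univ _ (Finset.mem_univ j)]
    have hrowj : (∏ k ∈ Finset.Ioi j,
        ((Real.sinh (Function.update x j s j - Function.update x j s k) : ℝ) : ℂ)
          ^ (β * mass j * mass k)) = B s := by
      refine Finset.prod_congr rfl fun k hk => ?_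
      rw [hupdj, hupd k (ne_of_gt (Finset.mem_Ioi.1 hk))]
    have hrow : ∀ i ∈ Finset.univ.erase j,
        (∏ k ∈ Finset.Ioi i,
          ((Real.sinh (Function.update x j s i - Function.update x j s k) : ℝ) : ℂ)
            ^ (β * mass i * mass k))
        = (if i < j then ((Real.sinh (x i - s) : ℝ) : ℂ) ^ (β * mass i * mass j) else 1) *
          ∏ k ∈ (Finset.Ioi i).erase j,
            ((Real.sinh (x i - x k) : ℝ) : ℂ) ^ (β * mass i * mass k) := by
      intro i hi
      have hij : i ≠ j := (Finset.mem_erase.1 hi).1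
      by_cases hlt : i < j
      · have hjmem : j ∈ Finset.Ioi i := Finset.mem_Ioi.2 hlt
        rw [← Finset.mul_prod_erase _ _ hjmem, if_pos hlt, hupd i hij, hupdj]
        congr 1
        refine Finset.prod_congr rfl fun k hk => ?_
        rw [hupd k (Finset.mem_erase.1 hk).1]
      · have hjmem : j ∉ Finset.Ioi i := by
          rw [Finset.mem_Ioi]; exact hlt
        rw [if_neg hlt, one_mul, Finset.erase_eq_of_notMem hjmem]
        refine Finset.prod_congr rfl fun k hk => ?_
        have hkj : k ≠ j := by
          rintro rfl
          exact hjmem hk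
        rw [hupd i hij, hupd k hkj]
    rw [hrowj, Finset.prod_congr rfl hrow, Finset.prod_mul_distrib]
    have hAeq : (∏ i ∈ Finset.univ.erase j,
        (if i < j then ((Real.sinh (x i - s) : ℝ) : ℂ) ^ (β * mass i * mass j) else 1)) = A s := by
      rw [← Finset.prod_filter]
      apply Finset.prod_congr _ (fun _ _ => rfl)
      ext k
      simp only [Finset.mem_filter, Finset.mem_erase, Finset.mem_univ, true_and, Finset.mem_Iio,
        and_true]
      exact ⟨fun h => h.2, fun h => ⟨ne_of_lt h, h⟩⟩
    rw [hAeq, hC]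
    ring
  -- log-derivative sums
  set LA : ℝ → ℂ := fun s => ∑ i ∈ Finset.Iio j,
      (β * mass i * mass j) * ((co (s - x i) : ℝ) : ℂ) with hLA
  set LB : ℝ → ℂ := fun s => ∑ k ∈ Finset.Ioi j,
      (β * mass j * mass k) * ((co (s - x k) : ℝ) : ℂ) with hLB
  have hA' : ∀ s ∈ U, HasDerivAt A (A s * LA s) s := by
    intro s hs
    apply hasDerivAt_prodlog
    intro i hi
    have hilt : i < j := Finset.mem_Iio.1 hi
    have hpos : 0 < Real.sinh (x i - s) := by
      rw [Real.sinh_pos_iff]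
      linarith [hU1 s hs i hilt]
    exact factor2 (x i) s _ hpos
  have hB' : ∀ s ∈ U, HasDerivAt B (B s * LB s) s := by
    intro s hs
    apply hasDerivAt_prodlog
    intro k hk
    have hkgt : j < k := Finset.mem_Ioi.1 hk
    have hpos : 0 < Real.sinh (s - x k) := by
      rw [Real.sinh_pos_iff]
      linarith [hU2 s hs k hkgt]
    exact factor1 (x k) s _ hpos
  have hW : ∀ s ∈ U, HasDerivAt (fun u => C * (A u * B u))
      ((C * (A s * B s)) * (LA s + LB s)) s := by
    intro s hs
    have h3 := ((hA' s hs).mul (hB' s hs)).const_mul C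
    refine h3.congr_deriv ?_
    ring
  have hfun : (fun s => ∏ i : Fin N, ∏ k ∈ Finset.Ioi i,
      ((Real.sinh (Function.update x j s i - Function.update x j s k) : ℝ) : ℂ)
        ^ (β * mass i * mass k)) = fun s => C * (A s * B s) := funext key
  rw [hfun]
  have hd1 : deriv (fun s => C * (A s * B s)) =ᶠ[nhds (x j)]
      fun s => (C * (A s * B s)) * (LA s + LB s) :=
    Filter.eventually_of_mem (hUopen.mem_nhds hxj) (fun s hs => (hW s hs).deriv)
  rw [Filter.EventuallyEq.deriv_eq hd1]
  have hLA' : HasDerivAt LA (∑ i ∈ Finset.Iio j,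
      (β * mass i * mass j) * ((1 - co (x j - x i) ^ 2 : ℝ) : ℂ)) (x j) := by
    rw [hLA]
    apply HasDerivAt.fun_sum
    intro i hi
    have hne : Real.sinh (x j - x i) ≠ 0 := by
      rw [Real.sinh_ne_zero]
      have := hx i j (Finset.mem_Iio.1 hi); intro hc; linarith [sub_eq_zero.1 hc ▸ this]
    have h1 : HasDerivAt (fun s : ℝ => s - x i) 1 (x j) := (hasDerivAt_id _).sub_const _
    have h2 := (hasDerivAt_co hne).comp (x j) h1
    have h3 := (h2.ofReal_comp).const_mul (β * mass i * mass j)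
    simpa [Function.comp] using h3
  have hLB' : HasDerivAt LB (∑ k ∈ Finset.Ioi j,
      (β * mass j * mass k) * ((1 - co (x j - x k) ^ 2 : ℝ) : ℂ)) (x j) := by
    rw [hLB]
    apply HasDerivAt.fun_sum
    intro k hk
    have hne : Real.sinh (x j - x k) ≠ 0 := by
      rw [Real.sinh_ne_zero]
      have := hx j k (Finset.mem_Ioi.1 hk); intro hc; linarith [sub_eq_zero.1 hc ▸ this]
    have h1 : HasDerivAt (fun s : ℝ => s - x k) 1 (x j) := (hasDerivAt_id _).sub_const _
    have h2 := (hasDerivAt_co hne).comp (x j) h1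
    have h3 := (h2.ofReal_comp).const_mul (β * mass j * mass k)
    simpa [Function.comp] using h3
  have hL' : HasDerivAt (fun s => LA s + LB s)
      ((∑ i ∈ Finset.Iio j, (β * mass i * mass j) * ((1 - co (x j - x i) ^ 2 : ℝ) : ℂ))
        + ∑ k ∈ Finset.Ioi j, (β * mass j * mass k) * ((1 - co (x j - x k) ^ 2 : ℝ) : ℂ)) (x j) :=
    hLA'.add hLB'
  have hmul := (hW (x j) hxj).mul hL'
  rw [(show HasDerivAt (fun s => C * (A s * B s) * (LA s + LB s)) _ (x j) from hmul).deriv]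
  have hupdself : Function.update x j (x j) = x := Function.update_eq_self j x
  have hWx : C * (A (x j) * B (x j)) = ∏ i : Fin N, ∏ k ∈ Finset.Ioi i,
      ((Real.sinh (x i - x k) : ℝ) : ℂ) ^ (β * mass i * mass k) := by
    rw [← key (x j), hupdself]
  have hLsum : LA (x j) + LB (x j)
      = ∑ i ∈ Finset.univ.erase j, β * mass j * mass i * ((co (x j - x i) : ℝ) : ℂ) := by
    rw [erase_split]
    congr 1
    rw [hLA]
    exact Finset.sum_congr rfl fun i _ => by ring
  have hL'sum : (∑ i ∈ Finset.Iio j, (β * mass i * mass j) * ((1 - co (x j - x i) ^ 2 : ℝ) : ℂ))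
        + ∑ k ∈ Finset.Ioi j, (β * mass j * mass k) * ((1 - co (x j - x k) ^ 2 : ℝ) : ℂ)
      = ∑ i ∈ Finset.univ.erase j, β * mass j * mass i * ((1 - co (x j - x i) ^ 2 : ℝ) : ℂ) := by
    rw [erase_split]
    congr 1
    exact Finset.sum_congr rfl fun i _ => by ring
  rw [hWx, hLsum, hL'sum]
  ring

lemma co_triple (a b : ℝ) (ha : Real.sinh a ≠ 0) (hb : Real.sinh b ≠ 0)
    (hab : Real.sinh (a + b) ≠ 0) :
    co a * co (a + b) - co a * co b + co (a + b) * co b = 1 := by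
  have hab' : Real.sinh a * Real.cosh b + Real.cosh a * Real.sinh b ≠ 0 := by
    rwa [Real.sinh_add] at hab
  unfold co
  rw [Real.sinh_add, Real.cosh_add]
  field_simp
  ring

lemma co_tri_pts (a b : ℝ) (ha : Real.sinh a ≠ 0) (hb : Real.sinh b ≠ 0)
    (hab : Real.sinh (a + b) ≠ 0) :
    co a * co (a + b) + co (-a) * co b + co (-(a + b)) * co (-b) = 1 := by
  rw [co_neg, co_neg, co_neg]
  linear_combination co_triple a b ha hb hab

lemma co_sq (r : ℝ) (h : Real.sinh r ≠ 0) : co r ^ 2 - 1 = 1 / Real.sinh r ^ 2 := by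
  have := Real.cosh_sq_sub_sinh_sq r
  field_simp [co]
  unfold co
  field_simp
  linear_combination this

variable {N : ℕ}

lemma sum_erase_ite (s : Finset (Fin N)) (a : Fin N) (f : Fin N → ℂ) :
    ∑ i ∈ s.erase a, f i = ∑ i ∈ s, if i ≠ a then f i else 0 := by
  rw [← Finset.filter_ne', Finset.sum_filter]

lemma Oswap (f : Fin N → Fin N → ℂ) :
    ∑ i : Fin N, ∑ j ∈ Finset.univ.erase i, f i j
      = ∑ i : Fin N, ∑ j ∈ Finset.univ.erase i, f j i := by
  refine Finset.sum_comm' ?_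
  intro i j
  simp only [Finset.mem_univ, Finset.mem_erase, and_true, true_and, and_comm]
  rw [ne_comm]

lemma pair_sym (f : Fin N → Fin N → ℂ) (hf : ∀ i j, i ≠ j → f i j = f j i) :
    2 * ∑ i : Fin N, ∑ j ∈ Finset.Ioi i, f i j
      = ∑ i : Fin N, ∑ j ∈ Finset.univ.erase i, f i j := by
  rw [Finset.sum_congr rfl fun i (_ : i ∈ Finset.univ) => erase_split N i (f i),
    Finset.sum_add_distrib]
  have h2 : ∑ i : Fin N, ∑ j ∈ Finset.Iio i, f i j
      = ∑ i : Fin N, ∑ j ∈ Finset.Ioi i, f j i := by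
    refine Finset.sum_comm' ?_
    intro i j
    simp only [Finset.mem_univ, Finset.mem_Iio, Finset.mem_Ioi, and_true, true_and]
  rw [h2, Finset.sum_congr rfl fun i (_ : i ∈ Finset.univ) =>
    Finset.sum_congr rfl fun j hj => hf j i (ne_of_gt (Finset.mem_Ioi.1 hj))]
  ring

noncomputable def TO (g : Fin N → Fin N → Fin N → ℂ) : ℂ :=
  ∑ j : Fin N, ∑ i ∈ Finset.univ.erase j, ∑ k ∈ (Finset.univ.erase j).erase i, g j i k

lemma TO_eq_ite (g : Fin N → Fin N → Fin N → ℂ) :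
    TO g = ∑ j : Fin N, ∑ i : Fin N, ∑ k : Fin N,
      if i ≠ j ∧ k ≠ j ∧ k ≠ i then g j i k else 0 := by
  unfold TO
  refine Finset.sum_congr rfl fun j _ => ?_
  rw [sum_erase_ite]
  refine Finset.sum_congr rfl fun i _ => ?_
  by_cases hij : i ≠ j
  · rw [if_pos hij, sum_erase_ite, sum_erase_ite]
    refine Finset.sum_congr rfl fun k _ => ?_
    by_cases h1 : k ≠ i <;> by_cases h2 : k ≠ j <;> simp [h1, h2, hij]
  · rw [if_neg hij]
    refine (Finset.sum_eq_zero fun k _ => ?_).symm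
    rw [if_neg]
    tauto

lemma sum3_swap12 (F : Fin N → Fin N → Fin N → ℂ) :
    ∑ j : Fin N, ∑ i : Fin N, ∑ k : Fin N, F j i k
      = ∑ j : Fin N, ∑ i : Fin N, ∑ k : Fin N, F i j k := by
  rw [Finset.sum_comm]

lemma sum3_swap13 (F : Fin N → Fin N → Fin N → ℂ) :
    ∑ j : Fin N, ∑ i : Fin N, ∑ k : Fin N, F j i k
      = ∑ j : Fin N, ∑ i : Fin N, ∑ k : Fin N, F k i j := by
  have h1 : ∑ j : Fin N, ∑ i : Fin N, ∑ k : Fin N, F j i k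
      = ∑ j : Fin N, ∑ k : Fin N, ∑ i : Fin N, F j i k :=
    Finset.sum_congr rfl fun j _ => Finset.sum_comm
  have h2 : ∑ j : Fin N, ∑ k : Fin N, ∑ i : Fin N, F j i k
      = ∑ k : Fin N, ∑ j : Fin N, ∑ i : Fin N, F j i k := Finset.sum_comm
  have h3 : ∑ k : Fin N, ∑ j : Fin N, ∑ i : Fin N, F j i k
      = ∑ k : Fin N, ∑ i : Fin N, ∑ j : Fin N, F j i k :=
    Finset.sum_congr rfl fun k _ => Finset.sum_comm
  rw [h1, h2, h3]

lemma TO_perm1 (g : Fin N → Fin N → Fin N → ℂ) :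
    TO g = TO (fun j i k => g i j k) := by
  rw [TO_eq_ite, TO_eq_ite]
  rw [sum3_swap12 (fun j i k => if i ≠ j ∧ k ≠ j ∧ k ≠ i then g j i k else 0)]
  refine Finset.sum_congr rfl fun j _ => Finset.sum_congr rfl fun i _ =>
    Finset.sum_congr rfl fun k _ => ?_
  refine if_congr ?_ rfl rfl
  constructor
  · rintro ⟨a, b, c⟩; exact ⟨a.symm, c, b⟩
  · rintro ⟨a, b, c⟩; exact ⟨a.symm, c, b⟩

lemma TO_perm2 (g : Fin N → Fin N → Fin N → ℂ) :
    TO g = TO (fun j i k => g k i j) := by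
  rw [TO_eq_ite, TO_eq_ite]
  rw [sum3_swap13 (fun j i k => if i ≠ j ∧ k ≠ j ∧ k ≠ i then g j i k else 0)]
  refine Finset.sum_congr rfl fun j _ => Finset.sum_congr rfl fun i _ =>
    Finset.sum_congr rfl fun k _ => ?_
  refine if_congr ?_ rfl rfl
  constructor
  · rintro ⟨a, b, c⟩; exact ⟨c.symm, b.symm, a.symm⟩
  · rintro ⟨a, b, c⟩; exact ⟨c.symm, b.symm, a.symm⟩

lemma TO_add (g1 g2 : Fin N → Fin N → Fin N → ℂ) :
    TO g1 + TO g2 = TO (fun j i k => g1 j i k + g2 j i k) := by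
  unfold TO
  rw [← Finset.sum_add_distrib]
  refine Finset.sum_congr rfl fun j _ => ?_
  rw [← Finset.sum_add_distrib]
  refine Finset.sum_congr rfl fun i _ => ?_
  rw [← Finset.sum_add_distrib]

lemma TO_congr (g1 g2 : Fin N → Fin N → Fin N → ℂ)
    (h : ∀ j i k : Fin N, i ≠ j → k ≠ j → k ≠ i → g1 j i k = g2 j i k) :
    TO g1 = TO g2 := by
  unfold TO
  refine Finset.sum_congr rfl fun j _ => Finset.sum_congr rfl fun i hi =>
    Finset.sum_congr rfl fun k hk => ?_
  exact h j i k (Finset.mem_erase.1 hi).1 (Finset.mem_erase.1 (Finset.mem_erase.1 hk).2).1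
    (Finset.mem_erase.1 hk).1

lemma TO_cube (m : Fin N → ℂ) :
    TO (fun j i k => m j * m i * m k)
      = (∑ j, m j) ^ 3 - (∑ j, m j ^ 3)
        - 3 * ∑ j : Fin N, ∑ i ∈ Finset.univ.erase j, m j ^ 2 * m i := by
  have hcube : (∑ j, m j) ^ 3 = ∑ j : Fin N, ∑ i : Fin N, ∑ k : Fin N, m j * m i * m k := by
    have h0 : (∑ j, m j) ^ 3 = (∑ j, m j) * ((∑ i, m i) * (∑ k, m k)) := by ring
    rw [h0, Finset.sum_mul]
    refine Finset.sum_congr rfl fun j _ => ?_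
    rw [Finset.sum_mul, Finset.mul_sum]
    refine Finset.sum_congr rfl fun i _ => ?_
    rw [Finset.mul_sum, Finset.mul_sum]
    exact Finset.sum_congr rfl fun k _ => by ring
  have hswap : ∑ j : Fin N, ∑ i ∈ Finset.univ.erase j, m j * m i ^ 2
      = ∑ j : Fin N, ∑ i ∈ Finset.univ.erase j, m j ^ 2 * m i := by
    rw [Oswap]
    exact Finset.sum_congr rfl fun j _ => Finset.sum_congr rfl fun i _ => by ring
  have hbig : ∑ j : Fin N, ∑ i : Fin N, ∑ k : Fin N, m j * m i * m k
      = (∑ j, m j ^ 3) + (∑ j : Fin N, ∑ i ∈ Finset.univ.erase j, m j ^ 2 * m i)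
        + ((∑ j : Fin N, ∑ i ∈ Finset.univ.erase j, m j ^ 2 * m i)
          + ((∑ j : Fin N, ∑ i ∈ Finset.univ.erase j, m j * m i ^ 2)
            + TO (fun j i k => m j * m i * m k))) := by
    have hj : ∀ j : Fin N, (∑ i : Fin N, ∑ k : Fin N, m j * m i * m k)
        = (∑ k : Fin N, m j * m j * m k)
          + ∑ i ∈ Finset.univ.erase j, ∑ k : Fin N, m j * m i * m k :=
      fun j => (Finset.add_sum_erase _ _ (Finset.mem_univ j)).symm
    have hjj : ∀ j : Fin N, (∑ k : Fin N, m j * m j * m k)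
        = m j ^ 3 + ∑ k ∈ Finset.univ.erase j, m j ^ 2 * m k := by
      intro j
      rw [← Finset.add_sum_erase _ (fun k => m j * m j * m k) (Finset.mem_univ j)]
      congr 1
      · ring
      · exact Finset.sum_congr rfl fun k _ => by ring
    have hik : ∀ j : Fin N, ∀ i ∈ Finset.univ.erase j, (∑ k : Fin N, m j * m i * m k)
        = m j ^ 2 * m i + (m j * m i ^ 2
            + ∑ k ∈ (Finset.univ.erase j).erase i, m j * m i * m k) := by
      intro j i hi
      rw [← Finset.add_sum_erase _ (fun k => m j * m i * m k) (Finset.mem_univ j),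
        ← Finset.add_sum_erase _ (fun k => m j * m i * m k) hi]
      congr 1
      · ring
      congr 1
      ring
    calc ∑ j : Fin N, ∑ i : Fin N, ∑ k : Fin N, m j * m i * m k
        = ∑ j : Fin N, ((m j ^ 3 + ∑ k ∈ Finset.univ.erase j, m j ^ 2 * m k)
            + ∑ i ∈ Finset.univ.erase j, (m j ^ 2 * m i + (m j * m i ^ 2
              + ∑ k ∈ (Finset.univ.erase j).erase i, m j * m i * m k))) := by
          refine Finset.sum_congr rfl fun j _ => ?_
          rw [hj j, hjj j]
          congr 1
          exact Finset.sum_congr rfl (hik j)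
      _ = (∑ j, m j ^ 3) + (∑ j : Fin N, ∑ i ∈ Finset.univ.erase j, m j ^ 2 * m i)
            + ((∑ j : Fin N, ∑ i ∈ Finset.univ.erase j, m j ^ 2 * m i)
              + ((∑ j : Fin N, ∑ i ∈ Finset.univ.erase j, m j * m i ^ 2)
                + TO (fun j i k => m j * m i * m k))) := by
          simp only [Finset.sum_add_distrib]
          unfold TO
          ring
  linear_combination (-1 : ℂ) * hcube - hbig - hswap

lemma Omul (a : ℂ) (f : Fin N → Fin N → ℂ) :
    ∑ i : Fin N, ∑ j ∈ Finset.univ.erase i, a * f i j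
      = a * ∑ i : Fin N, ∑ j ∈ Finset.univ.erase i, f i j := by
  rw [Finset.mul_sum]
  exact Finset.sum_congr rfl fun i _ => (Finset.mul_sum _ _ _).symm

lemma key_alg (β : ℂ) (m : Fin N → ℂ) (hm : ∀ j, m j ≠ 0)
    (cc : Fin N → Fin N → ℂ)
    (hanti : ∀ i j : Fin N, i ≠ j → cc i j = - cc j i)
    (htri : ∀ i j k : Fin N, i ≠ j → i ≠ k → j ≠ k →
      cc i j * cc i k + cc j i * cc j k + cc k i * cc k j = 1) :
    -(∑ j : Fin N, (m j)⁻¹ *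
        ((∑ i ∈ Finset.univ.erase j, β * m j * m i * cc j i) ^ 2
          + ∑ i ∈ Finset.univ.erase j, β * m j * m i * (1 - cc j i ^ 2)))
      + ∑ i : Fin N, ∑ j ∈ Finset.Ioi i,
          ((m i + m j) * β * (m i * m j * β - 1)) * (cc i j ^ 2 - 1)
    = -(β ^ 2 / 3) * ((∑ j, m j) ^ 3 - ∑ j, m j ^ 3) := by
  have hsq : ∀ i j : Fin N, i ≠ j → cc i j ^ 2 = cc j i ^ 2 := fun i j h => by
    rw [hanti i j h]; ring
  -- H1 : simplify the inverse masses
  have H1 : (∑ j : Fin N, (m j)⁻¹ *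
        ((∑ i ∈ Finset.univ.erase j, β * m j * m i * cc j i) ^ 2
          + ∑ i ∈ Finset.univ.erase j, β * m j * m i * (1 - cc j i ^ 2)))
      = ∑ j : Fin N, (β ^ 2 * (m j * (∑ i ∈ Finset.univ.erase j, m i * cc j i) ^ 2)
          + β * ∑ i ∈ Finset.univ.erase j, m i * (1 - cc j i ^ 2)) := by
    refine Finset.sum_congr rfl fun j _ => ?_
    have e1 : ∑ i ∈ Finset.univ.erase j, β * m j * m i * cc j i
        = (β * m j) * ∑ i ∈ Finset.univ.erase j, m i * cc j i := by
      rw [Finset.mul_sum]; exact Finset.sum_congr rfl fun i _ => by ring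
    have e2 : ∑ i ∈ Finset.univ.erase j, β * m j * m i * (1 - cc j i ^ 2)
        = (β * m j) * ∑ i ∈ Finset.univ.erase j, m i * (1 - cc j i ^ 2) := by
      rw [Finset.mul_sum]; exact Finset.sum_congr rfl fun i _ => by ring
    rw [e1, e2]
    field_simp [hm j]
  have H2 : (∑ j : Fin N, (β ^ 2 * (m j * (∑ i ∈ Finset.univ.erase j, m i * cc j i) ^ 2)
          + β * ∑ i ∈ Finset.univ.erase j, m i * (1 - cc j i ^ 2)))
      = β ^ 2 * (∑ j : Fin N, m j * (∑ i ∈ Finset.univ.erase j, m i * cc j i) ^ 2)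
        + β * ∑ j : Fin N, ∑ i ∈ Finset.univ.erase j, m i * (1 - cc j i ^ 2) := by
    rw [Finset.sum_add_distrib, ← Finset.mul_sum, ← Finset.mul_sum]
  have H3 : (∑ j : Fin N, m j * (∑ i ∈ Finset.univ.erase j, m i * cc j i) ^ 2)
      = (∑ j : Fin N, ∑ i ∈ Finset.univ.erase j, m j * m i ^ 2 * cc j i ^ 2)
        + TO (fun j i k => m j * (m i * cc j i) * (m k * cc j k)) := by
    have e2 : ∀ j : Fin N, m j * (∑ i ∈ Finset.univ.erase j, m i * cc j i) ^ 2
        = ∑ i ∈ Finset.univ.erase j, (m j * m i ^ 2 * cc j i ^ 2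
            + ∑ k ∈ (Finset.univ.erase j).erase i, m j * (m i * cc j i) * (m k * cc j k)) := by
      intro j
      rw [sq, Finset.sum_mul_sum, Finset.mul_sum]
      refine Finset.sum_congr rfl fun i hi => ?_
      rw [← Finset.add_sum_erase _ (fun k => (m i * cc j i) * (m k * cc j k)) hi, mul_add,
        Finset.mul_sum]
      congr 1
      · ring
      · exact Finset.sum_congr rfl fun k _ => by ring
    rw [Finset.sum_congr rfl fun j _ => e2 j]
    simp only [Finset.sum_add_distrib]
    rfl
  have H4 : (∑ j : Fin N, ∑ i ∈ Finset.univ.erase j, m j * m i ^ 2 * cc j i ^ 2)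
      = ∑ i : Fin N, ∑ j ∈ Finset.univ.erase i, m i ^ 2 * m j * cc i j ^ 2 := by
    rw [Oswap]
    refine Finset.sum_congr rfl fun i _ => Finset.sum_congr rfl fun j hj => ?_
    rw [hsq j i (Finset.mem_erase.1 hj).1]
    ring
  have H5 := pair_sym (fun i j => ((m i + m j) * β * (m i * m j * β - 1)) * (cc i j ^ 2 - 1))
    (fun i j h => by simp only [hsq i j h]; ring)
  have H6 : (∑ i : Fin N, ∑ j ∈ Finset.univ.erase i,
        ((m i + m j) * β * (m i * m j * β - 1)) * (cc i j ^ 2 - 1))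
      = β ^ 2 * (∑ i : Fin N, ∑ j ∈ Finset.univ.erase i, m i ^ 2 * m j * cc i j ^ 2)
        - β ^ 2 * (∑ i : Fin N, ∑ j ∈ Finset.univ.erase i, m i ^ 2 * m j)
        + (β ^ 2 * (∑ i : Fin N, ∑ j ∈ Finset.univ.erase i, m j ^ 2 * m i * cc i j ^ 2)
          - β ^ 2 * (∑ i : Fin N, ∑ j ∈ Finset.univ.erase i, m j ^ 2 * m i))
        + (-(β * ∑ i : Fin N, ∑ j ∈ Finset.univ.erase i, m i * (cc i j ^ 2 - 1))
          - β * ∑ i : Fin N, ∑ j ∈ Finset.univ.erase i, m j * (cc i j ^ 2 - 1)) := by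
    have hptw : ∀ i : Fin N, ∀ j ∈ Finset.univ.erase i,
        ((m i + m j) * β * (m i * m j * β - 1)) * (cc i j ^ 2 - 1)
        = β ^ 2 * (m i ^ 2 * m j * cc i j ^ 2) + (-(β ^ 2)) * (m i ^ 2 * m j)
          + (β ^ 2 * (m j ^ 2 * m i * cc i j ^ 2) + (-(β ^ 2)) * (m j ^ 2 * m i))
          + ((-β) * (m i * (cc i j ^ 2 - 1)) + (-β) * (m j * (cc i j ^ 2 - 1))) :=
      fun i j _ => by ring
    rw [Finset.sum_congr rfl fun i _ => Finset.sum_congr rfl (hptw i)]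
    simp only [Finset.sum_add_distrib]
    rw [Omul (β ^ 2), Omul (-(β ^ 2)), Omul (β ^ 2), Omul (-(β ^ 2)), Omul (-β), Omul (-β)]
    ring
  have H4b : (∑ i : Fin N, ∑ j ∈ Finset.univ.erase i, m j ^ 2 * m i * cc i j ^ 2)
      = ∑ i : Fin N, ∑ j ∈ Finset.univ.erase i, m i ^ 2 * m j * cc i j ^ 2 := by
    rw [Oswap]
    refine Finset.sum_congr rfl fun i _ => Finset.sum_congr rfl fun j hj => ?_
    rw [hsq j i (Finset.mem_erase.1 hj).1]
  have H4c : (∑ i : Fin N, ∑ j ∈ Finset.univ.erase i, m j ^ 2 * m i)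
      = ∑ i : Fin N, ∑ j ∈ Finset.univ.erase i, m i ^ 2 * m j := by
    rw [Oswap]
  have H7 : (∑ j : Fin N, ∑ i ∈ Finset.univ.erase j, m i * (1 - cc j i ^ 2))
      = -(∑ i : Fin N, ∑ j ∈ Finset.univ.erase i, m i * (cc i j ^ 2 - 1)) := by
    rw [Oswap (fun a b => m b * (1 - cc a b ^ 2))]
    have hpt : ∀ a : Fin N, ∀ b ∈ Finset.univ.erase a,
        m a * (1 - cc b a ^ 2) = (-1 : ℂ) * (m a * (cc a b ^ 2 - 1)) := by
      intro a b hb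
      rw [← hsq a b (Finset.mem_erase.1 hb).1.symm]
      ring
    rw [Finset.sum_congr rfl fun a _ => Finset.sum_congr rfl (hpt a), Omul (-1 : ℂ)]
    ring
  have H7b : (∑ i : Fin N, ∑ j ∈ Finset.univ.erase i, m j * (cc i j ^ 2 - 1))
      = ∑ i : Fin N, ∑ j ∈ Finset.univ.erase i, m i * (cc i j ^ 2 - 1) := by
    rw [Oswap (fun a b => m b * (cc a b ^ 2 - 1))]
    refine Finset.sum_congr rfl fun a _ => Finset.sum_congr rfl fun b hb => ?_
    rw [hsq b a (Finset.mem_erase.1 hb).1]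
  have H8 : 3 * TO (fun j i k => m j * (m i * cc j i) * (m k * cc j k))
      = TO (fun j i k => m j * m i * m k) := by
    set t : Fin N → Fin N → Fin N → ℂ := fun j i k => m j * (m i * cc j i) * (m k * cc j k)
      with ht
    have p1 := TO_perm1 t
    have p2 := TO_perm2 t
    have hadd := TO_add t (fun j i k => t i j k)
    have q1 := TO_add (fun j i k => t j i k + t i j k) (fun j i k => t k i j)
    have hpt : TO (fun j i k => (fun j i k => t j i k + t i j k) j i k + t k i j)
        = TO (fun j i k => m j * m i * m k) := by
      refine TO_congr _ _ fun j i k h1 h2 h3 => ?_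
      have htr := htri i j k h1 h3.symm h2.symm
      simp only [ht]
      linear_combination (m i * m j * m k) * htr
    linear_combination p1 + p2 + hadd + q1 + hpt
  have H9 := TO_cube m
  linear_combination (-1 : ℂ) * H1 - H2 - β ^ 2 * H3 - β ^ 2 * H4 + (1 / 2 : ℂ) * H5
    + (1 / 2 : ℂ) * H6 + (β ^ 2 / 2) * H4b - (β ^ 2 / 2) * H4c - β * H7 - (β / 2) * H7b
    - (β ^ 2 / 3) * H8 - (β ^ 2 / 3) * H9



/-- Sen's theorem: the ground-state type eigenfunction of the generalised
trigonometric Calogero–Moser–Sutherland operator with particles of different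
masses.  We work on the real chamber `x₁ > x₂ > … > x_N` (so that
`sinh (x_i - x_j) > 0` for `i < j`), with powers taken via the principal
complex power. -/
theorem sen_theorem_trigonometric (N : ℕ) (hN : 0 < N) (β : ℂ)
    (mass : Fin N → ℂ) (hmass : ∀ j, mass j ≠ 0)
    (x : Fin N → ℝ) (hx : ∀ i j : Fin N, i < j → x j < x i)
    (γ : Fin N → Fin N → ℂ)
    (hγ : γ = fun j k => (mass j + mass k) * β * (mass j * mass k * β - 1))
    (Φ : (Fin N → ℝ) → ℂ)
    (hΦ : Φ = fun y => ∏ i : Fin N, ∏ j ∈ Finset.Ioi i,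
        ((Real.sinh (y i - y j) : ℂ)) ^ (β * mass i * mass j)) :
    -(∑ j : Fin N, (mass j)⁻¹ *
          deriv (deriv (fun s => Φ (Function.update x j s))) (x j))
      + (∑ i : Fin N, ∑ j ∈ Finset.Ioi i, γ i j / (Real.sinh (x i - x j) : ℂ) ^ 2) * Φ x
    = (-(β ^ 2 / 3) * ((∑ j, mass j) ^ 3 - ∑ j, mass j ^ 3)) * Φ x := by
  subst hγ
  have hsinhR : ∀ i j : Fin N, i ≠ j → Real.sinh (x i - x j) ≠ 0 := by
    intro i j h
    rw [Real.sinh_ne_zero]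
    rcases lt_or_gt_of_ne h with h' | h'
    · have := hx i j h'; intro hc; apply absurd hc; intro hc'; linarith
    · have := hx j i h'; intro hc; apply absurd hc; intro hc'; linarith
  have hanti : ∀ i j : Fin N, i ≠ j →
      ((co (x i - x j) : ℝ) : ℂ) = -((co (x j - x i) : ℝ) : ℂ) := by
    intro i j h
    rw [show x i - x j = -(x j - x i) by ring, co_neg]
    push_cast
    ring
  have htri : ∀ i j k : Fin N, i ≠ j → i ≠ k → j ≠ k →
      ((co (x i - x j) : ℝ) : ℂ) * ((co (x i - x k) : ℝ) : ℂ)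
        + ((co (x j - x i) : ℝ) : ℂ) * ((co (x j - x k) : ℝ) : ℂ)
        + ((co (x k - x i) : ℝ) : ℂ) * ((co (x k - x j) : ℝ) : ℂ) = 1 := by
    intro i j k hij hik hjk
    have e1 : x i - x k = (x i - x j) + (x j - x k) := by ring
    have e2 : x j - x i = -(x i - x j) := by ring
    have e3 : x k - x i = -((x i - x j) + (x j - x k)) := by ring
    have e4 : x k - x j = -(x j - x k) := by ring
    have R : co (x i - x j) * co (x i - x k) + co (x j - x i) * co (x j - x k)
        + co (x k - x i) * co (x k - x j) = 1 := by
      rw [e1, e2, e3, e4]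
      exact co_tri_pts _ _ (hsinhR i j hij) (hsinhR j k hjk) (by rw [← e1]; exact hsinhR i k hik)
    exact_mod_cast R
  have K : -(∑ j : Fin N, (mass j)⁻¹ *
        ((∑ i ∈ Finset.univ.erase j, β * mass j * mass i * ((co (x j - x i) : ℝ) : ℂ)) ^ 2
          + ∑ i ∈ Finset.univ.erase j,
              β * mass j * mass i * (1 - ((co (x j - x i) : ℝ) : ℂ) ^ 2)))
      + ∑ i : Fin N, ∑ j ∈ Finset.Ioi i,
          ((mass i + mass j) * β * (mass i * mass j * β - 1))
            * (((co (x i - x j) : ℝ) : ℂ) ^ 2 - 1)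
    = -(β ^ 2 / 3) * ((∑ j, mass j) ^ 3 - ∑ j, mass j ^ 3) :=
    key_alg β mass hmass (fun i j => ((co (x i - x j) : ℝ) : ℂ)) hanti htri
  have hT1 : (∑ j : Fin N, (mass j)⁻¹ *
        deriv (deriv (fun s => Φ (Function.update x j s))) (x j))
      = ∑ j : Fin N, (mass j)⁻¹ * (Φ x *
          ((∑ i ∈ Finset.univ.erase j, β * mass j * mass i * ((co (x j - x i) : ℝ) : ℂ)) ^ 2
            + ∑ i ∈ Finset.univ.erase j,
                β * mass j * mass i * (1 - ((co (x j - x i) : ℝ) : ℂ) ^ 2))) := by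
    refine Finset.sum_congr rfl fun j _ => ?_
    rw [lemA N β mass x hx Φ hΦ j]
    push_cast
    ring
  have hfac : (∑ j : Fin N, (mass j)⁻¹ * (Φ x *
        ((∑ i ∈ Finset.univ.erase j, β * mass j * mass i * ((co (x j - x i) : ℝ) : ℂ)) ^ 2
          + ∑ i ∈ Finset.univ.erase j,
              β * mass j * mass i * (1 - ((co (x j - x i) : ℝ) : ℂ) ^ 2))))
      = Φ x * ∑ j : Fin N, (mass j)⁻¹ *
          ((∑ i ∈ Finset.univ.erase j, β * mass j * mass i * ((co (x j - x i) : ℝ) : ℂ)) ^ 2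
            + ∑ i ∈ Finset.univ.erase j,
                β * mass j * mass i * (1 - ((co (x j - x i) : ℝ) : ℂ) ^ 2)) := by
    rw [Finset.mul_sum]
    exact Finset.sum_congr rfl fun j _ => by ring
  have hT2 : (∑ i : Fin N, ∑ j ∈ Finset.Ioi i,
        ((fun j k => (mass j + mass k) * β * (mass j * mass k * β - 1)) i j)
          / (Real.sinh (x i - x j) : ℂ) ^ 2)
      = ∑ i : Fin N, ∑ j ∈ Finset.Ioi i,
          ((mass i + mass j) * β * (mass i * mass j * β - 1))
            * (((co (x i - x j) : ℝ) : ℂ) ^ 2 - 1) := by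
    refine Finset.sum_congr rfl fun i _ => Finset.sum_congr rfl fun j hj => ?_
    have hij : i ≠ j := ne_of_lt (Finset.mem_Ioi.1 hj)
    have hr := co_sq (x i - x j) (hsinhR i j hij)
    have hid : ((co (x i - x j) : ℝ) : ℂ) ^ 2 - 1
        = 1 / ((Real.sinh (x i - x j) : ℝ) : ℂ) ^ 2 := by
      exact_mod_cast congrArg (fun r : ℝ => (r : ℂ)) hr
    rw [hid, mul_one_div]
  linear_combination (-1 : ℂ) * hT1 - hfac + (Φ x) * K + (Φ x) * hT2
end

section
/- Let N be a positive integer and m₁,…,m_N nonzero complex numbers, and set γ_{jk} = (m_j + m_k)β(m_j m_k β − 1) for a parameter β. Then Φ₀(x) = ∏_{i<j}(x_i − x_j)^{β m_i m_j} satisfies H Φ₀ = 0 where H = −∑_{j=1}^N (1/m_j) ∂²/∂x_j² + ∑_{j<k} γ_{jk}/(x_j − x_k)², on the domain where all x_i are distinct. -/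
open Complex Finset

namespace SenAux

variable {N : ℕ}

lemma erase_eq_Iio_union_Ioi (j : Fin N) :
    (univ : Finset (Fin N)).erase j = Iio j ∪ Ioi j := by
  ext k
  simp only [Finset.mem_erase, Finset.mem_union, Finset.mem_Iio, Finset.mem_Ioi, Finset.mem_univ,
    and_true]
  exact ne_iff_lt_or_gt

lemma sum_erase_split (j : Fin N) (f : Fin N → ℂ) :
    ∑ k ∈ (univ : Finset (Fin N)).erase j, f k
      = ∑ k ∈ Iio j, f k + ∑ k ∈ Ioi j, f k := by
  rw [erase_eq_Iio_union_Ioi, Finset.sum_union]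
  simp only [Finset.disjoint_left, Finset.mem_Iio, Finset.mem_Ioi]
  exact fun a ha => not_lt.2 ha.le

lemma pair_sum (g : Fin N → Fin N → ℂ) :
    ∑ j : Fin N, ∑ k ∈ (univ : Finset (Fin N)).erase j, g j k
      = ∑ i : Fin N, ∑ k ∈ Ioi i, (g i k + g k i) := by
  simp only [sum_erase_split, Finset.sum_add_distrib]
  rw [add_comm]
  congr 1
  exact Finset.sum_comm' (by intro j k; simp [Finset.mem_Iio, Finset.mem_Ioi])

noncomputable def R (f : Fin N → Fin N → Fin N → ℂ) : ℂ :=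
  ∑ j : Fin N, ∑ k ∈ (univ : Finset (Fin N)).erase j,
    ∑ l ∈ ((univ : Finset (Fin N)).erase j).erase k, f j k l

lemma R_swap23 (f : Fin N → Fin N → Fin N → ℂ) :
    R f = R (fun j k l => f j l k) := by
  unfold R
  refine Finset.sum_congr rfl fun j _ => ?_
  refine Finset.sum_comm' ?_
  intro k l
  simp only [Finset.mem_erase, Finset.mem_univ, and_true]
  constructor
  · rintro ⟨h1, h2, h3⟩; exact ⟨⟨fun h => h2 h.symm, h1⟩, h3⟩
  · rintro ⟨⟨h1, h2⟩, h3⟩; exact ⟨h2, fun h => h1 h.symm, h3⟩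

lemma R_swap12 (f : Fin N → Fin N → Fin N → ℂ) :
    R f = R (fun j k l => f k j l) := by
  unfold R
  rw [Finset.sum_comm' (t' := univ) (s' := fun k => (univ : Finset (Fin N)).erase k)
    (by intro j k; simp [Finset.mem_erase, ne_comm])]
  refine Finset.sum_congr rfl fun k _ => Finset.sum_congr rfl fun j _ => ?_
  rw [Finset.erase_right_comm]

lemma R_cyc1 (f : Fin N → Fin N → Fin N → ℂ) :
    R f = R (fun j k l => f k l j) :=
  (R_swap23 f).trans (R_swap12 _)

lemma R_cyc2 (f : Fin N → Fin N → Fin N → ℂ) :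
    R f = R (fun j k l => f l j k) :=
  (R_swap12 f).trans (R_swap23 _)

lemma R_eq_zero (f : Fin N → Fin N → Fin N → ℂ)
    (hf : ∀ j k l : Fin N, j ≠ k → j ≠ l → k ≠ l →
      f j k l + f k l j + f l j k = 0) : R f = 0 := by
  have h3 : R f + R f + R f = 0 := by
    nth_rewrite 2 [R_cyc1 f]
    nth_rewrite 2 [R_cyc2 f]
    have hmerge : R f + R (fun j k l => f k l j) + R (fun j k l => f l j k)
        = R (fun j k l => f j k l + f k l j + f l j k) := by
      simp only [R, ← Finset.sum_add_distrib]
    rw [hmerge]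
    unfold R
    refine Finset.sum_eq_zero fun j _ => Finset.sum_eq_zero fun k hk => Finset.sum_eq_zero fun l hl => ?_
    have hjk : j ≠ k := fun h => (Finset.mem_erase.1 hk).1 h.symm
    have hlk : l ≠ k := (Finset.mem_erase.1 hl).1
    have hlj : l ≠ j := (Finset.mem_erase.1 (Finset.mem_erase.1 hl).2).1
    exact hf j k l hjk (fun h => hlj h.symm) (fun h => hlk h.symm)
  have h3' : (3 : ℂ) * R f = 0 := by linear_combination h3
  have := mul_eq_zero.1 h3'
  simpa using this



open Complex Finset


lemma sq_expand {N : ℕ} (s : Finset (Fin N)) (g : Fin N → ℂ) :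
    (∑ k ∈ s, g k) ^ 2 = ∑ k ∈ s, (g k ^ 2 + ∑ l ∈ s.erase k, g k * g l) := by
  rw [sq, Finset.sum_mul_sum]
  refine Finset.sum_congr rfl fun k hk => ?_
  rw [← Finset.add_sum_erase s (fun l => g k * g l) hk, sq]

lemma key_alg (N : ℕ) (β : ℂ) (m : Fin N → ℂ) (hm : ∀ j, m j ≠ 0)
    (X : Fin N → ℂ) (hX : ∀ i k : Fin N, i ≠ k → X i ≠ X k) :
    ∑ j : Fin N, (m j)⁻¹ *
      ((∑ k ∈ (univ : Finset (Fin N)).erase j, β * m j * m k * (X j - X k)⁻¹) ^ 2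
        - ∑ k ∈ (univ : Finset (Fin N)).erase j, β * m j * m k * ((X j - X k) ^ 2)⁻¹)
    = ∑ i : Fin N, ∑ k ∈ Ioi i,
        (m i + m k) * β * (m i * m k * β - 1) * ((X i - X k) ^ 2)⁻¹ := by
  have hd : ∀ i k : Fin N, i ≠ k → X i - X k ≠ 0 := fun i k h => sub_ne_zero.2 (hX i k h)
  set f : Fin N → Fin N → Fin N → ℂ :=
    fun j k l => m j * m k * m l * ((X j - X k)⁻¹ * (X j - X l)⁻¹) with hfdef
  have hR0 : R f = 0 := by
    refine R_eq_zero f fun j k l hjk hjl hkl => ?_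
    have h1 := hd j k hjk
    have h2 := hd j l hjl
    have h3 := hd k l hkl
    have h4 := hd k j (Ne.symm hjk)
    have h5 := hd l j (Ne.symm hjl)
    have h6 := hd l k (Ne.symm hkl)
    simp only [hfdef]
    field_simp
    ring
  have step1 : ∑ j : Fin N, (m j)⁻¹ *
      ((∑ k ∈ (univ : Finset (Fin N)).erase j, β * m j * m k * (X j - X k)⁻¹) ^ 2
        - ∑ k ∈ (univ : Finset (Fin N)).erase j, β * m j * m k * ((X j - X k) ^ 2)⁻¹)
    = (∑ j : Fin N, ∑ k ∈ (univ : Finset (Fin N)).erase j,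
        (β ^ 2 * m j * m k ^ 2 - β * m k) * ((X j - X k) ^ 2)⁻¹)
      + β ^ 2 * R f := by
    rw [R, Finset.mul_sum, ← Finset.sum_add_distrib]
    refine Finset.sum_congr rfl fun j _ => ?_
    rw [sq_expand, Finset.sum_add_distrib, Finset.mul_sum]
    have hmj := hm j
    have e1 : (m j)⁻¹ *
        ((∑ k ∈ (univ : Finset (Fin N)).erase j, (β * m j * m k * (X j - X k)⁻¹) ^ 2
          + ∑ k ∈ (univ : Finset (Fin N)).erase j, ∑ l ∈ ((univ : Finset (Fin N)).erase j).erase k,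
              (β * m j * m k * (X j - X k)⁻¹) * (β * m j * m l * (X j - X l)⁻¹))
          - ∑ k ∈ (univ : Finset (Fin N)).erase j, β * m j * m k * ((X j - X k) ^ 2)⁻¹)
      = (∑ k ∈ (univ : Finset (Fin N)).erase j,
          (m j)⁻¹ * ((β * m j * m k * (X j - X k)⁻¹) ^ 2 - β * m j * m k * ((X j - X k) ^ 2)⁻¹))
        + ∑ k ∈ (univ : Finset (Fin N)).erase j, ∑ l ∈ ((univ : Finset (Fin N)).erase j).erase k,
            (m j)⁻¹ * ((β * m j * m k * (X j - X k)⁻¹) * (β * m j * m l * (X j - X l)⁻¹)) := by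
      have hsplit : ∀ A B C : ℂ, (m j)⁻¹ * (A + B - C)
          = ((m j)⁻¹ * A - (m j)⁻¹ * C) + (m j)⁻¹ * B := by intro A B C; ring
      rw [hsplit]
      congr 1
      · rw [Finset.mul_sum, Finset.mul_sum, ← Finset.sum_sub_distrib]
        exact Finset.sum_congr rfl fun k _ => by ring
      · rw [Finset.mul_sum]
        exact Finset.sum_congr rfl fun k _ => by rw [Finset.mul_sum]
    rw [e1]
    congr 1
    · refine Finset.sum_congr rfl fun k hk => ?_
      have hkj : k ≠ j := (Finset.mem_erase.1 hk).1
      have hXjk := hd j k (Ne.symm hkj)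
      field_simp
    · refine Finset.sum_congr rfl fun k hk => ?_
      rw [Finset.mul_sum]
      refine Finset.sum_congr rfl fun l hl => ?_
      have hkj : k ≠ j := (Finset.mem_erase.1 hk).1
      have hlj : l ≠ j := (Finset.mem_erase.1 (Finset.mem_erase.1 hl).2).1
      have h1 := hd j k (Ne.symm hkj)
      have h2 := hd j l (Ne.symm hlj)
      simp only [hfdef]
      field_simp
  rw [step1, hR0, mul_zero, add_zero, pair_sum]
  refine Finset.sum_congr rfl fun i _ => Finset.sum_congr rfl fun k hk => ?_
  have hsq : (X k - X i) ^ 2 = (X i - X k) ^ 2 := by ring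
  rw [hsq]
  ring



lemma cpow_exp_of_pos (t : ℝ) (ht : 0 < t) (c : ℂ) :
    ((t : ℝ) : ℂ) ^ c = Complex.exp (c * ((Real.log t : ℝ) : ℂ)) := by
  rw [Complex.cpow_def_of_ne_zero (Complex.ofReal_ne_zero.2 ht.ne'),
    ← Complex.ofReal_log ht.le, mul_comm]

lemma prod_eq_exp {N : ℕ} (x : Fin N → ℝ) (a : Fin N → Fin N → ℂ)
    (ha : ∀ i k, a i k = a k i) (j : Fin N) (s : ℝ)
    (h1 : ∀ k, k < j → s < x k) (h2 : ∀ k, j < k → x k < s) :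
    ∏ i : Fin N, ∏ k ∈ Ioi i,
        ((Function.update x j s i - Function.update x j s k : ℝ) : ℂ) ^ (a i k)
    = (∏ i ∈ (univ : Finset (Fin N)).erase j, ∏ k ∈ (Ioi i).erase j,
          ((x i - x k : ℝ) : ℂ) ^ (a i k))
      * Complex.exp (∑ k ∈ (univ : Finset (Fin N)).erase j,
          a j k * ((Real.log (s - x k) : ℝ) : ℂ)) := by
  classical
  have huj : Function.update x j s j = s := Function.update_self j s x
  have hui : ∀ i : Fin N, i ≠ j → Function.update x j s i = x i :=
    fun i hi => Function.update_of_ne hi s x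
  rw [← Finset.mul_prod_erase univ _ (Finset.mem_univ j)]
  have hinner : ∀ i ∈ (univ : Finset (Fin N)).erase j,
      (∏ k ∈ Ioi i, ((Function.update x j s i - Function.update x j s k : ℝ) : ℂ) ^ (a i k))
      = (if i < j then ((x i - s : ℝ) : ℂ) ^ (a i j) else 1)
        * ∏ k ∈ (Ioi i).erase j, ((x i - x k : ℝ) : ℂ) ^ (a i k) := by
    intro i hi
    have hij : i ≠ j := (Finset.mem_erase.1 hi).1
    have hrest : ∀ k ∈ (Ioi i).erase j,
        ((Function.update x j s i - Function.update x j s k : ℝ) : ℂ) ^ (a i k)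
          = ((x i - x k : ℝ) : ℂ) ^ (a i k) := fun k hk => by
      rw [hui i hij, hui k (Finset.mem_erase.1 hk).1]
    by_cases h : i < j
    · rw [if_pos h, ← Finset.mul_prod_erase (Ioi i) _ (Finset.mem_Ioi.2 h),
        Finset.prod_congr rfl hrest, huj, hui i hij]
    · have hj : j ∉ Ioi i := by simpa [Finset.mem_Ioi] using h
      rw [if_neg h, one_mul]
      simp only [Finset.erase_eq_of_notMem hj] at hrest ⊢
      exact Finset.prod_congr rfl hrest
  rw [Finset.prod_congr rfl hinner, Finset.prod_mul_distrib]
  have hfj : ∏ k ∈ Ioi j, ((Function.update x j s j - Function.update x j s k : ℝ) : ℂ) ^ (a j k)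
      = ∏ k ∈ Ioi j, ((s - x k : ℝ) : ℂ) ^ (a j k) :=
    Finset.prod_congr rfl fun k hk => by rw [huj, hui k (Finset.mem_Ioi.1 hk).ne']
  have hite : ∏ i ∈ (univ : Finset (Fin N)).erase j,
      (if i < j then ((x i - s : ℝ) : ℂ) ^ (a i j) else 1)
      = ∏ i ∈ Iio j, ((x i - s : ℝ) : ℂ) ^ (a i j) := by
    rw [← Finset.prod_filter]
    congr 1
    ext i
    simp only [Finset.mem_filter, Finset.mem_erase, Finset.mem_univ, true_and, and_true,
      Finset.mem_Iio]
    constructor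
    · intro h; exact h.2
    · intro h; exact ⟨ne_of_lt h, h⟩
  have hIoi : ∏ k ∈ Ioi j, ((s - x k : ℝ) : ℂ) ^ (a j k)
      = Complex.exp (∑ k ∈ Ioi j, a j k * ((Real.log (s - x k) : ℝ) : ℂ)) := by
    rw [Complex.exp_sum]
    exact Finset.prod_congr rfl fun k hk =>
      cpow_exp_of_pos _ (sub_pos.2 (h2 k (Finset.mem_Ioi.1 hk))) _
  have hIio : ∏ i ∈ Iio j, ((x i - s : ℝ) : ℂ) ^ (a i j)
      = Complex.exp (∑ i ∈ Iio j, a j i * ((Real.log (s - x i) : ℝ) : ℂ)) := by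
    rw [Complex.exp_sum]
    refine Finset.prod_congr rfl fun i hi => ?_
    have hpos : 0 < x i - s := sub_pos.2 (h1 i (Finset.mem_Iio.1 hi))
    rw [cpow_exp_of_pos _ hpos, ha i j,
      show Real.log (x i - s) = Real.log (s - x i) by
        rw [← neg_sub s (x i), Real.log_neg_eq_log]]
  rw [hfj, hIoi, hite, hIio,
    sum_erase_split j (fun k => a j k * ((Real.log (s - x k) : ℝ) : ℂ)), Complex.exp_add]
  ring




lemma deriv_aux {N : ℕ} (x : Fin N → ℝ) (hx : ∀ i k : Fin N, i < k → x k < x i)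
    (a : Fin N → Fin N → ℂ) (ha : ∀ i k, a i k = a k i) (j : Fin N) :
    deriv (deriv (fun s => ∏ i : Fin N, ∏ k ∈ Ioi i,
        ((Function.update x j s i - Function.update x j s k : ℝ) : ℂ) ^ (a i k))) (x j)
    = (∏ i : Fin N, ∏ k ∈ Ioi i, ((x i - x k : ℝ) : ℂ) ^ (a i k)) *
      ((∑ k ∈ (univ : Finset (Fin N)).erase j, a j k * ((x j - x k : ℝ) : ℂ)⁻¹) ^ 2
        - ∑ k ∈ (univ : Finset (Fin N)).erase j, a j k * (((x j - x k : ℝ) : ℂ) ^ 2)⁻¹) := by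
  classical
  set U : Set ℝ := ⋂ k : Fin N,
    if k < j then Set.Iio (x k) else if j < k then Set.Ioi (x k) else Set.univ with hUdef
  have hU : IsOpen U := isOpen_iInter_of_finite fun k => by
    split_ifs
    · exact isOpen_Iio
    · exact isOpen_Ioi
    · exact isOpen_univ
  have hxjU : x j ∈ U := Set.mem_iInter.2 fun k => by
    by_cases h1 : k < j
    · simpa [h1] using hx k j h1
    · by_cases h2 : j < k
      · simp only [if_neg h1, if_pos h2]
        exact hx j k h2
      · simp [h1, h2]
  have hUlt : ∀ s ∈ U, ∀ k, k < j → s < x k := fun s hs k hk => by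
    have := Set.mem_iInter.1 hs k
    rwa [if_pos hk] at this
  have hUgt : ∀ s ∈ U, ∀ k, j < k → x k < s := fun s hs k hk => by
    have := Set.mem_iInter.1 hs k
    rwa [if_neg (lt_asymm hk), if_pos hk] at this
  have hne : ∀ s ∈ U, ∀ k : Fin N, k ≠ j → s - x k ≠ 0 := fun s hs k hk => by
    rcases lt_or_gt_of_ne hk with h | h
    · exact sub_ne_zero.2 (ne_of_lt (hUlt s hs k h))
    · exact sub_ne_zero.2 (ne_of_gt (hUgt s hs k h))
  set M : ℝ → ℂ := fun s => ∑ k ∈ (univ : Finset (Fin N)).erase j,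
    a j k * ((Real.log (s - x k) : ℝ) : ℂ) with hMdef
  set C : ℂ := ∏ i ∈ (univ : Finset (Fin N)).erase j, ∏ k ∈ (Ioi i).erase j,
    ((x i - x k : ℝ) : ℂ) ^ (a i k) with hCdef
  set D : ℝ → ℂ := fun s => ∑ k ∈ (univ : Finset (Fin N)).erase j,
    a j k * ((s - x k : ℝ) : ℂ)⁻¹ with hDdef
  set E : ℂ := ∑ k ∈ (univ : Finset (Fin N)).erase j,
    a j k * (-1 / ((x j - x k : ℝ) : ℂ) ^ 2) with hEdef
  have hPC : (∏ i : Fin N, ∏ k ∈ Ioi i, ((x i - x k : ℝ) : ℂ) ^ (a i k))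
      = C * Complex.exp (M (x j)) := by
    have h := prod_eq_exp x a ha j (x j) (fun k hk => hx k j hk) (fun k hk => hx j k hk)
    simpa only [Function.update_eq_self] using h
  have hM : ∀ s ∈ U, HasDerivAt M (D s) s := by
    intro s hs
    refine HasDerivAt.fun_sum fun k hk => ?_
    have hk' : k ≠ j := (Finset.mem_erase.1 hk).1
    have hs0 : s - x k ≠ 0 := hne s hs k hk'
    have hl : HasDerivAt (fun y : ℝ => Real.log (y - x k)) (s - x k)⁻¹ s := by
      simpa [Function.comp_def] using (Real.hasDerivAt_log hs0).comp s ((hasDerivAt_id s).sub_const (x k))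
    have h := HasDerivAt.const_mul (a j k) hl.ofReal_comp
    simpa [Complex.ofReal_inv] using h
  have hD : HasDerivAt D E (x j) := by
    refine HasDerivAt.fun_sum fun k hk => ?_
    have hk' : k ≠ j := (Finset.mem_erase.1 hk).1
    have h0 : ((x j - x k : ℝ) : ℂ) ≠ 0 :=
      Complex.ofReal_ne_zero.2 (hne (x j) hxjU k hk')
    have h1 : HasDerivAt (fun y : ℝ => ((y - x k : ℝ) : ℂ)) 1 (x j) := by
      simpa using ((hasDerivAt_id (x j)).sub_const (x k)).ofReal_comp
    have hr : HasDerivAt (fun y : ℝ => (y - x k)⁻¹)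
        (-1 / (x j - x k) ^ 2) (x j) := by
      have h3 := HasDerivAt.inv ((hasDerivAt_id (x j)).sub_const (x k))
        (hne (x j) hxjU k hk')
      simpa [Pi.inv_def] using h3
    have h2 : HasDerivAt (fun y : ℝ => ((y - x k : ℝ) : ℂ)⁻¹)
        (-1 / ((x j - x k : ℝ) : ℂ) ^ 2) (x j) := by
      have h3 := hr.ofReal_comp
      simp only [Complex.ofReal_inv] at h3
      convert h3 using 1
      push_cast
      ring
    have h4 := HasDerivAt.const_mul (a j k) h2
    simpa using h4
  have hF : ∀ s ∈ U, HasDerivAt (fun y => C * Complex.exp (M y))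
      (C * Complex.exp (M s) * D s) s := by
    intro s hs
    simpa [mul_assoc] using HasDerivAt.const_mul C (hM s hs).cexp
  have hmem : U ∈ nhds (x j) := hU.mem_nhds hxjU
  have hfF : (fun s => ∏ i : Fin N, ∏ k ∈ Ioi i,
        ((Function.update x j s i - Function.update x j s k : ℝ) : ℂ) ^ (a i k))
      =ᶠ[nhds (x j)] (fun y => C * Complex.exp (M y)) :=
    Filter.eventuallyEq_of_mem hmem fun s hs =>
      prod_eq_exp x a ha j s (hUlt s hs) (hUgt s hs)
  have hderivF : deriv (fun y => C * Complex.exp (M y))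
      =ᶠ[nhds (x j)] (fun s => C * Complex.exp (M s) * D s) :=
    Filter.eventuallyEq_of_mem hmem fun s hs => (hF s hs).deriv
  have hev : deriv (fun s => ∏ i : Fin N, ∏ k ∈ Ioi i,
        ((Function.update x j s i - Function.update x j s k : ℝ) : ℂ) ^ (a i k))
      =ᶠ[nhds (x j)] (fun s => C * Complex.exp (M s) * D s) := hfF.deriv.trans hderivF
  rw [hev.deriv_eq]
  have hG : HasDerivAt (fun s => C * Complex.exp (M s) * D s)
      (C * Complex.exp (M (x j)) * D (x j) * D (x j) + C * Complex.exp (M (x j)) * E)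
      (x j) := (hF (x j) hxjU).mul hD
  rw [hG.deriv, hPC]
  have hE : E = -∑ k ∈ (univ : Finset (Fin N)).erase j,
      a j k * (((x j - x k : ℝ) : ℂ) ^ 2)⁻¹ := by
    rw [hEdef, ← Finset.sum_neg_distrib]
    exact Finset.sum_congr rfl fun k _ => by ring
  have hDxj : D (x j) = ∑ k ∈ (univ : Finset (Fin N)).erase j,
      a j k * ((x j - x k : ℝ) : ℂ)⁻¹ := rfl
  rw [hE, ← hDxj]
  ring


lemma final_combine {N : ℕ} (P W : ℂ) (c : Fin N → ℂ) (Z : Fin N → ℂ)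
    (h : ∑ j : Fin N, c j * Z j = W) :
    -(∑ j : Fin N, c j * (P * Z j)) + W * P = 0 := by
  have h2 : ∑ j : Fin N, c j * (P * Z j) = P * ∑ j : Fin N, c j * Z j := by
    rw [Finset.mul_sum]
    exact Finset.sum_congr rfl fun j _ => by ring
  rw [h2, h]
  ring
end SenAux

open Complex Finset



/-- Rational analogue of Sen's theorem: the ground-state type eigenfunction of
the rational multi-mass Calogero–Moser operator has eigenvalue `0`.  We work on
the real chamber `x₁ > x₂ > … > x_N` (so that `x_i - x_j > 0` for `i < j`),
with powers taken via the principal complex power. -/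
theorem sen_theorem_rational (N : ℕ) (hN : 0 < N) (β : ℂ)
    (mass : Fin N → ℂ) (hmass : ∀ j, mass j ≠ 0)
    (x : Fin N → ℝ) (hx : ∀ i j : Fin N, i < j → x j < x i)
    (γ : Fin N → Fin N → ℂ)
    (hγ : γ = fun j k => (mass j + mass k) * β * (mass j * mass k * β - 1))
    (Φ : (Fin N → ℝ) → ℂ)
    (hΦ : Φ = fun y => ∏ i : Fin N, ∏ j ∈ Finset.Ioi i,
        (((y i - y j : ℝ) : ℂ)) ^ (β * mass i * mass j)) :
    -(∑ j : Fin N, (mass j)⁻¹ *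
          deriv (deriv (fun s => Φ (Function.update x j s))) (x j))
      + (∑ i : Fin N, ∑ j ∈ Finset.Ioi i, γ i j / ((x i - x j : ℝ) : ℂ) ^ 2) * Φ x
    = 0 := by
  subst hγ hΦ
  have key := SenAux.deriv_aux x hx (fun i k => β * mass i * mass k)
    (fun i k => by ring)
  simp only [key]
  have hX : ∀ i k : Fin N, i ≠ k → ((x i : ℝ) : ℂ) ≠ ((x k : ℝ) : ℂ) := by
    intro i k h
    have : x i ≠ x k := by
      rcases lt_or_gt_of_ne h with h' | h'
      · exact ne_of_gt (hx i k h')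
      · exact ne_of_lt (hx k i h')
    simpa using this
  have halg := SenAux.key_alg N β mass hmass (fun k => ((x k : ℝ) : ℂ)) hX
  refine SenAux.final_combine _ _ _ _ ?_
  push_cast
  simp only [div_eq_mul_inv]
  exact halg
end

section
/- Let m be a positive integer. For variables x = (x₁,…,x_k) and z = (z₁,…,z_p) with all entries pairwise distinct, define K(x;z) = A(x,z)^m / (A(x)^m A(z)^m) · exp(μ(x̄ − z̄)), where A(x,z) = ∏_{i,j}(x_i − z_j), A(x) = ∏_{i<j}(x_i − x_j), and x̄ = ∑ x_i. Then L_m^{(k)}(x) K = L_m^{(p)}(z) K + μ²(p − k) K, where L_m^{(n)} = −∑_{i=1}^n ∂²/∂x_i² + ∑_{i<j} 2m(m+1)/(x_i − x_j)² is the rational Calogero–Moser operator. -/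
open Complex Finset

section RationalKernelHelpers

variable {n : ℕ}

lemma sum3_comm' {A B C : Type*} [Fintype A] [Fintype B] [Fintype C]
    (f : A → B → C → ℂ) :
    ∑ a, ∑ b, ∑ c, f a b c = ∑ a, ∑ c, ∑ b, f a b c :=
  Finset.sum_congr rfl fun _ _ => Finset.sum_comm

lemma sum3_rot {A B C : Type*} [Fintype A] [Fintype B] [Fintype C]
    (f : A → B → C → ℂ) :
    ∑ a, ∑ b, ∑ c, f a b c = ∑ b, ∑ c, ∑ a, f a b c := by
  rw [Finset.sum_comm, sum3_comm']

lemma sum_antisym (f : Fin n → Fin n → ℂ) (hf : ∀ i j, f i j = - f j i) :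
    ∑ i, ∑ j, f i j = 0 := by
  have h : ∑ i, ∑ j, f i j = ∑ j, ∑ i, f i j := Finset.sum_comm
  have h2 : ∑ j : Fin n, ∑ i : Fin n, f i j = - ∑ j : Fin n, ∑ i : Fin n, f j i := by
    rw [← Finset.sum_neg_distrib]
    refine Finset.sum_congr rfl fun j _ => ?_
    rw [← Finset.sum_neg_distrib]
    exact Finset.sum_congr rfl fun i _ => hf i j
  rw [h2] at h
  linear_combination h / 2

lemma sum_split_diag (g : Fin n → Fin n → ℂ) :
    ∑ j, ∑ l, g j l = (∑ j, g j j) + ∑ j, ∑ l, (if j = l then 0 else g j l) := by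
  rw [← Finset.sum_add_distrib]
  refine Finset.sum_congr rfl fun j _ => ?_
  have h : ∀ l, g j l = (if j = l then g j l else 0) + (if j = l then 0 else g j l) := by
    intro l; split <;> simp
  rw [Finset.sum_congr rfl fun l _ => h l, Finset.sum_add_distrib, Finset.sum_ite_eq univ j]
  simp

lemma sum_mul_sum' {A B : Type*} [Fintype A] [Fintype B] (f : A → ℂ) (g : B → ℂ) :
    (∑ a, f a) * (∑ b, g b) = ∑ a, ∑ b, f a * g b := by
  rw [Finset.sum_mul_sum]

lemma triple_cancel (y : Fin n → ℂ) (hy : ∀ i j, i ≠ j → y i ≠ y j) :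
    ∑ i, ∑ j, ∑ l, (if j = l then 0 else (y i - y j)⁻¹ * (y i - y l)⁻¹) = 0 := by
  set G : Fin n → Fin n → Fin n → ℂ := fun i j l =>
    if i = j ∨ i = l ∨ j = l then 0 else (y i - y j)⁻¹ * (y i - y l)⁻¹ with hG
  have hguard : ∑ i, ∑ j, ∑ l, (if j = l then 0 else (y i - y j)⁻¹ * (y i - y l)⁻¹)
      = ∑ i, ∑ j, ∑ l, G i j l := by
    refine Finset.sum_congr rfl fun i _ => Finset.sum_congr rfl fun j _ =>
      Finset.sum_congr rfl fun l _ => ?_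
    simp only [hG]
    by_cases hjl : j = l
    · simp [hjl]
    · by_cases hij : i = j
      · simp [← hij, hjl, sub_self]
      · by_cases hil : i = l
        · simp [← hil, hjl, hij, sub_self]
        · simp [hij, hil, hjl]
  rw [hguard]
  set T := ∑ i, ∑ j, ∑ l, G i j l with hT
  have rot1 : T = ∑ i, ∑ j, ∑ l, G l i j := by rw [hT]; exact sum3_rot G
  have rot2 : T = ∑ i, ∑ j, ∑ l, G j l i := by
    rw [hT, sum3_rot G]; exact sum3_rot (fun a b c => G c a b)
  have h3 : T + T + T = 0 := by
    nth_rewrite 2 [rot1]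
    nth_rewrite 2 [rot2]
    rw [hT, ← Finset.sum_add_distrib, ← Finset.sum_add_distrib]
    simp only [← Finset.sum_add_distrib]
    refine Finset.sum_eq_zero fun i _ => Finset.sum_eq_zero fun j _ =>
      Finset.sum_eq_zero fun l _ => ?_
    simp only [hG]
    by_cases hd : i = j ∨ i = l ∨ j = l
    · rw [if_pos hd, if_pos (by tauto), if_pos (by tauto)]; ring
    · push_neg at hd
      obtain ⟨hij, hil, hjl⟩ := hd
      rw [if_neg (by tauto), if_neg (by tauto), if_neg (by tauto)]
      have h1 : y i - y j ≠ 0 := sub_ne_zero.mpr (hy i j hij)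
      have h2 : y i - y l ≠ 0 := sub_ne_zero.mpr (hy i l hil)
      have h3 : y j - y l ≠ 0 := sub_ne_zero.mpr (hy j l hjl)
      have h4 : y j - y i ≠ 0 := sub_ne_zero.mpr (hy j i (Ne.symm hij))
      have h5 : y l - y i ≠ 0 := sub_ne_zero.mpr (hy l i (Ne.symm hil))
      have h6 : y l - y j ≠ 0 := sub_ne_zero.mpr (hy l j (Ne.symm hjl))
      field_simp
      ring
  linear_combination h3 / 3

lemma mixed_x {k p : ℕ} (x : Fin k → ℂ) (z : Fin p → ℂ)
    (hx : ∀ i j, i ≠ j → x i ≠ x j) (hxz : ∀ i j, x i ≠ z j) :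
    2 * ∑ i, (∑ j, (x i - z j)⁻¹) * (∑ i', (x i - x i')⁻¹)
      = -∑ i, ∑ i', ∑ j, (if i = i' then 0 else (x i - z j)⁻¹ * (x i' - z j)⁻¹) := by
  have step : ∀ i : Fin k, (∑ j, (x i - z j)⁻¹) * (∑ i', (x i - x i')⁻¹)
      = ∑ i', ∑ j, (x i - z j)⁻¹ * (x i - x i')⁻¹ := by
    intro i
    rw [sum_mul_sum']
    exact Finset.sum_comm
  rw [Finset.sum_congr rfl fun i _ => step i]
  have swap : ∑ i, ∑ i', ∑ j, (x i - z j)⁻¹ * (x i - x i')⁻¹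
      = ∑ i, ∑ i', ∑ j, (x i' - z j)⁻¹ * (x i' - x i)⁻¹ := Finset.sum_comm
  rw [two_mul]
  nth_rewrite 2 [swap]
  rw [← Finset.sum_add_distrib]
  simp only [← Finset.sum_add_distrib]
  rw [← Finset.sum_neg_distrib]
  refine Finset.sum_congr rfl fun i _ => ?_
  rw [← Finset.sum_neg_distrib]
  refine Finset.sum_congr rfl fun i' _ => ?_
  rw [← Finset.sum_neg_distrib]
  refine Finset.sum_congr rfl fun j _ => ?_
  by_cases hii : i = i'
  · simp [hii, sub_self]
  · rw [if_neg hii]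
    have h1 : x i - z j ≠ 0 := sub_ne_zero.mpr (hxz i j)
    have h2 : x i' - z j ≠ 0 := sub_ne_zero.mpr (hxz i' j)
    have h3 : x i - x i' ≠ 0 := sub_ne_zero.mpr (hx i i' hii)
    have h4 : x i' - x i ≠ 0 := sub_ne_zero.mpr (hx i' i (Ne.symm hii))
    field_simp
    ring

lemma mixed_z {k p : ℕ} (x : Fin k → ℂ) (z : Fin p → ℂ)
    (hz : ∀ i j, i ≠ j → z i ≠ z j) (hxz : ∀ i j, x i ≠ z j) :
    2 * ∑ j, (∑ i, (x i - z j)⁻¹) * (∑ l, (z j - z l)⁻¹)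
      = ∑ j, ∑ l, ∑ i, (if j = l then 0 else (x i - z j)⁻¹ * (x i - z l)⁻¹) := by
  have step : ∀ j : Fin p, (∑ i, (x i - z j)⁻¹) * (∑ l, (z j - z l)⁻¹)
      = ∑ l, ∑ i, (x i - z j)⁻¹ * (z j - z l)⁻¹ := by
    intro j
    rw [sum_mul_sum']
    exact Finset.sum_comm
  rw [Finset.sum_congr rfl fun j _ => step j]
  have swap : ∑ j, ∑ l, ∑ i, (x i - z j)⁻¹ * (z j - z l)⁻¹
      = ∑ j, ∑ l, ∑ i, (x i - z l)⁻¹ * (z l - z j)⁻¹ := Finset.sum_comm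
  rw [two_mul]
  nth_rewrite 2 [swap]
  rw [← Finset.sum_add_distrib]
  simp only [← Finset.sum_add_distrib]
  refine Finset.sum_congr rfl fun j _ => Finset.sum_congr rfl fun l _ =>
    Finset.sum_congr rfl fun i _ => ?_
  by_cases hjl : j = l
  · simp [hjl, sub_self]
  · rw [if_neg hjl]
    have h1 : x i - z j ≠ 0 := sub_ne_zero.mpr (hxz i j)
    have h2 : x i - z l ≠ 0 := sub_ne_zero.mpr (hxz i l)
    have h3 : z j - z l ≠ 0 := sub_ne_zero.mpr (hz j l hjl)
    have h4 : z l - z j ≠ 0 := sub_ne_zero.mpr (hz l j (Ne.symm hjl))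
    field_simp
    ring

lemma sum_Ioi_sym (F : Fin n → Fin n → ℂ) (hsym : ∀ i j, F i j = F j i)
    (hdiag : ∀ i, F i i = 0) :
    2 * ∑ i, ∑ j ∈ Finset.Ioi i, F i j = ∑ i, ∑ j, F i j := by
  have hfil : ∀ i : Fin n, univ.filter (fun j => i < j) = Finset.Ioi i := by
    intro i; ext j; simp
  have key : ∀ i j : Fin n, F i j
      = (if i < j then F i j else 0) + (if j < i then F i j else 0) := by
    intro i j
    rcases lt_trichotomy i j with h | h | h
    · rw [if_pos h, if_neg (asymm h), add_zero]
    · rw [if_neg (h ▸ lt_irrefl i), if_neg (h ▸ lt_irrefl i), h, hdiag, add_zero]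
    · rw [if_neg (asymm h), if_pos h, zero_add]
  have hIoi : ∀ (G : Fin n → Fin n → ℂ) (i : Fin n),
      ∑ j, (if i < j then G i j else 0) = ∑ j ∈ Finset.Ioi i, G i j := by
    intro G i
    rw [← hfil, Finset.sum_filter]
  calc 2 * ∑ i, ∑ j ∈ Finset.Ioi i, F i j
      = (∑ i, ∑ j ∈ Finset.Ioi i, F i j) + ∑ i, ∑ j ∈ Finset.Ioi i, F i j := two_mul _
    _ = (∑ i, ∑ j, (if i < j then F i j else 0))
        + ∑ i, ∑ j, (if j < i then F i j else 0) := by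
        congr 1
        · exact (Finset.sum_congr rfl fun i _ => (hIoi F i)).symm
        · rw [Finset.sum_comm]
          refine (Finset.sum_congr rfl fun i _ => ?_).symm
          rw [hIoi (fun a b => F b a) i]
          exact Finset.sum_congr rfl fun j _ => hsym j i
    _ = ∑ i, ∑ j, F i j := by
        rw [← Finset.sum_add_distrib]
        refine Finset.sum_congr rfl fun i _ => ?_
        rw [← Finset.sum_add_distrib]
        exact (Finset.sum_congr rfl fun j _ => key i j).symm

lemma pair_support (i : Fin n) (u : Fin n → ℂ) :
    ∑ a, ∑ b ∈ Finset.Ioi a, (if a = i then u b else if b = i then u a else 0)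
      = ∑ j ∈ Finset.univ.erase i, u j := by
  rw [← Finset.add_sum_erase _ _ (Finset.mem_univ i)]
  have h1 : ∑ b ∈ Finset.Ioi i, (if i = i then u b else if b = i then u i else 0)
      = ∑ b ∈ Finset.Ioi i, u b := Finset.sum_congr rfl fun b _ => by rw [if_pos rfl]
  have h2 : ∀ a ∈ Finset.univ.erase i,
      (∑ b ∈ Finset.Ioi a, (if a = i then u b else if b = i then u a else 0))
        = if a < i then u a else 0 := by
    intro a ha
    have hai : a ≠ i := (Finset.mem_erase.mp ha).1
    rw [Finset.sum_congr rfl fun b _ => if_neg hai]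
    rw [Finset.sum_ite_eq' (Finset.Ioi a) i (fun _ => u a)]
    simp [Finset.mem_Ioi]
  rw [h1, Finset.sum_congr rfl h2, ← Finset.sum_filter]
  have h3 : (Finset.univ.erase i).filter (fun a => a < i) = Finset.Iio i := by
    ext a
    simp only [Finset.mem_filter, Finset.mem_erase, Finset.mem_univ, Finset.mem_Iio, true_and,
      and_iff_right_iff_imp]
    exact fun h => ⟨ne_of_lt h, trivial⟩
  rw [h3]
  have h4 : Finset.univ.erase i = Finset.Iio i ∪ Finset.Ioi i := by
    ext a
    simp only [Finset.mem_erase, Finset.mem_univ, and_true, Finset.mem_union, Finset.mem_Iio,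
      Finset.mem_Ioi]
    exact ⟨fun h => lt_or_gt_of_ne h, fun h => h.elim ne_of_lt ne_of_gt⟩
  rw [h4, Finset.sum_union (Finset.disjoint_Ioi_Iio i).symm]
  exact add_comm _ _

noncomputable def Kfun (m : ℕ) (μ : ℂ) {k p : ℕ} (x : Fin k → ℂ) (z : Fin p → ℂ) : ℂ :=
  (∏ i, ∏ j, (x i - z j)) ^ m
    / ((∏ i, ∏ j ∈ Finset.Ioi i, (x i - x j)) ^ m
        * (∏ i, ∏ j ∈ Finset.Ioi i, (z i - z j)) ^ m)
    * Complex.exp (μ * (∑ i, x i - ∑ i, z i))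

lemma Kswap (m : ℕ) (μ : ℂ) {k p : ℕ} (x : Fin k → ℂ) (z : Fin p → ℂ) :
    Kfun m μ x z = (-1 : ℂ)^(k*p*m) * Kfun m (-μ) z x := by
  simp only [Kfun]
  have hnum : (∏ i, ∏ j, (x i - z j)) = (-1 : ℂ)^(k*p) * ∏ j, ∏ i, (z j - x i) := by
    calc ∏ i, ∏ j, (x i - z j) = ∏ i : Fin k, ∏ j : Fin p, (-1 : ℂ) * (z j - x i) := by
          exact Finset.prod_congr rfl fun i _ => Finset.prod_congr rfl fun j _ => by ring
      _ = ∏ i : Fin k, ((-1 : ℂ)^p * ∏ j, (z j - x i)) := by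
          refine Finset.prod_congr rfl fun i _ => ?_
          rw [Finset.prod_mul_distrib, Finset.prod_const, Finset.card_univ, Fintype.card_fin]
      _ = ((-1 : ℂ)^p)^k * ∏ i : Fin k, ∏ j, (z j - x i) := by
          rw [Finset.prod_mul_distrib, Finset.prod_const, Finset.card_univ, Fintype.card_fin]
      _ = (-1 : ℂ)^(k*p) * ∏ j, ∏ i, (z j - x i) := by
          rw [← pow_mul, Finset.prod_comm, mul_comm p k]
  rw [hnum]
  have hexp : Complex.exp (μ * (∑ i, x i - ∑ i, z i))
      = Complex.exp (-μ * (∑ i, z i - ∑ i, x i)) := by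
    congr 1; ring
  rw [hexp]
  rw [mul_pow, ← pow_mul]
  ring

set_option maxHeartbeats 1600000 in
lemma side (m : ℕ) (μ : ℂ) {k p : ℕ} (x : Fin k → ℂ) (z : Fin p → ℂ)
    (hx : ∀ i j, i ≠ j → x i ≠ x j) (hz : ∀ i j, i ≠ j → z i ≠ z j)
    (hxz : ∀ i j, x i ≠ z j) (i : Fin k) :
    deriv (deriv (fun s => Kfun m μ (Function.update x i s) z)) (x i)
      = ((-(m:ℂ) * ∑ j, ((x i - z j)^2)⁻¹ + (m:ℂ) * ∑ j, ((x i - x j)^2)⁻¹)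
          + (μ + (m:ℂ) * ∑ j, (x i - z j)⁻¹ - (m:ℂ) * ∑ j, (x i - x j)⁻¹)^2)
        * Kfun m μ x z := by
  classical
  set N : ℂ → ℂ := fun s => ∏ i', ∏ j, (Function.update x i s i' - z j) with hN
  set D : ℂ → ℂ := fun s => ∏ a, ∏ b ∈ Finset.Ioi a,
    (Function.update x i s a - Function.update x i s b) with hD
  set Az : ℂ := ∏ a, ∏ b ∈ Finset.Ioi a, (z a - z b) with hAz
  set C : ℂ := ∑ i' ∈ Finset.univ.erase i, x i' with hC
  set Sz : ℂ := ∑ j, z j with hSz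
  set φ : ℂ → ℂ := fun s => μ + (m:ℂ) * ∑ j, (s - z j)⁻¹
    - (m:ℂ) * ∑ j ∈ Finset.univ.erase i, (s - x j)⁻¹ with hφ
  set h : ℂ → ℂ := fun s => Kfun m μ (Function.update x i s) z with hh
  have hsum : ∀ s : ℂ, ∑ i', Function.update x i s i' = s + C := by
    intro s
    rw [← Finset.add_sum_erase _ _ (Finset.mem_univ i), Function.update_self]
    congr 1
    exact Finset.sum_congr rfl fun j hj =>
      Function.update_of_ne (Finset.mem_erase.mp hj).1 _ _
  have hrepr : h = fun s => N s ^ m / (D s ^ m * Az ^ m)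
      * Complex.exp (μ * (s + C - Sz)) := by
    funext s
    simp only [hh, Kfun, hN, hD, hAz, hSz]
    rw [hsum s]
  -- differentiability of factors
  have hdNf : ∀ (i' : Fin k) (j : Fin p) (s : ℂ),
      DifferentiableAt ℂ (fun t => Function.update x i t i' - z j) s := by
    intro i' j s
    by_cases hii : i' = i
    · subst hii; simp only [Function.update_self]; fun_prop
    · simp only [Function.update_of_ne hii]; fun_prop
  have hdDf : ∀ (a b : Fin k) (s : ℂ),
      DifferentiableAt ℂ
        (fun t => Function.update x i t a - Function.update x i t b) s := by
    intro a b s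
    by_cases ha : a = i
    · subst ha
      by_cases hb : b = a
      · subst hb; simp only [Function.update_self]; fun_prop
      · simp only [Function.update_self, Function.update_of_ne hb]; fun_prop
    · by_cases hb : b = i
      · subst hb; simp only [Function.update_self, Function.update_of_ne ha]; fun_prop
      · simp only [Function.update_of_ne ha, Function.update_of_ne hb]; fun_prop
  have hdN : ∀ s, DifferentiableAt ℂ N s := fun s =>
    DifferentiableAt.fun_finsetProd fun i' _ =>
      DifferentiableAt.fun_finsetProd fun j _ => hdNf i' j s
  have hdD : ∀ s, DifferentiableAt ℂ D s := fun s =>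
    DifferentiableAt.fun_finsetProd fun a _ =>
      DifferentiableAt.fun_finsetProd fun b _ => hdDf a b s
  -- nonvanishing of factors
  have hNf0 : ∀ s : ℂ, (∀ j, s ≠ z j) → ∀ (i' : Fin k) (j : Fin p),
      Function.update x i s i' - z j ≠ 0 := by
    intro s hs i' j
    by_cases hii : i' = i
    · subst hii; rw [Function.update_self]; exact sub_ne_zero.mpr (hs j)
    · rw [Function.update_of_ne hii]; exact sub_ne_zero.mpr (hxz i' j)
  have hDf0 : ∀ s : ℂ, (∀ j, j ≠ i → s ≠ x j) → ∀ a b : Fin k, a < b →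
      Function.update x i s a - Function.update x i s b ≠ 0 := by
    intro s hs a b hab
    by_cases ha : a = i
    · have hbne : b ≠ i := by rw [← ha]; exact (ne_of_gt hab)
      rw [ha, Function.update_self, Function.update_of_ne hbne]
      exact sub_ne_zero.mpr (hs b hbne)
    · by_cases hbi : b = i
      · rw [hbi, Function.update_self, Function.update_of_ne ha]
        exact sub_ne_zero.mpr fun e => (hs a ha) e.symm
      · rw [Function.update_of_ne ha, Function.update_of_ne hbi]
        exact sub_ne_zero.mpr (hx a b (ne_of_lt hab))
  have hN0 : ∀ s : ℂ, (∀ j, s ≠ z j) → N s ≠ 0 := by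
    intro s hs
    rw [hN]
    exact Finset.prod_ne_zero_iff.mpr fun i' _ =>
      Finset.prod_ne_zero_iff.mpr fun j _ => hNf0 s hs i' j
  have hD0 : ∀ s : ℂ, (∀ j, j ≠ i → s ≠ x j) → D s ≠ 0 := by
    intro s hs
    rw [hD]
    exact Finset.prod_ne_zero_iff.mpr fun a _ =>
      Finset.prod_ne_zero_iff.mpr fun b hb =>
        hDf0 s hs a b (Finset.mem_Ioi.mp hb)
  have hAz0 : Az ≠ 0 := by
    rw [hAz]
    exact Finset.prod_ne_zero_iff.mpr fun a _ =>
      Finset.prod_ne_zero_iff.mpr fun b hb =>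
        sub_ne_zero.mpr (hz a b (ne_of_lt (Finset.mem_Ioi.mp hb)))
  -- logDeriv of exp factor
  have hexps : ∀ s : ℂ, logDeriv (fun t => Complex.exp (μ * (t + C - Sz))) s = μ := by
    intro s
    have hd : HasDerivAt (fun t : ℂ => μ * (t + C - Sz)) μ s := by
      simpa using (((hasDerivAt_id s).add_const C).sub_const Sz).const_mul μ
    have hde : HasDerivAt (fun t => Complex.exp (μ * (t + C - Sz)))
        (Complex.exp (μ * (s + C - Sz)) * μ) s := hd.cexp
    rw [logDeriv_apply, hde.deriv, mul_comm, mul_div_assoc,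
      div_self (Complex.exp_ne_zero _), mul_one]
  -- key pointwise identity
  have hkey : ∀ s : ℂ, (∀ j, s ≠ z j) → (∀ j, j ≠ i → s ≠ x j) →
      deriv h s = φ s * h s := by
    intro s hsz hsx
    have hN0s := hN0 s hsz
    have hD0s := hD0 s hsx
    have hden : D s ^ m * Az ^ m ≠ 0 :=
      mul_ne_zero (pow_ne_zero _ hD0s) (pow_ne_zero _ hAz0)
    have hratio0 : N s ^ m / (D s ^ m * Az ^ m) ≠ 0 :=
      div_ne_zero (pow_ne_zero _ hN0s) hden
    have hdratio : DifferentiableAt ℂ (fun t => N t ^ m / (D t ^ m * Az ^ m)) s :=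
      ((hdN s).pow m).div (((hdD s).pow m).mul_const _) hden
    have hdexp : DifferentiableAt ℂ (fun t => Complex.exp (μ * (t + C - Sz))) s := by
      fun_prop
    have hF0 : h s ≠ 0 := by
      rw [hrepr]
      exact mul_ne_zero hratio0 (Complex.exp_ne_zero _)
    have hlogN : logDeriv N s = ∑ j, (s - z j)⁻¹ := by
      have e0 : logDeriv N s
          = ∑ i', logDeriv (fun t => ∏ j, (Function.update x i t i' - z j)) s := by
        rw [hN]
        exact logDeriv_prod (s := univ)
          (f := fun i' => fun t => ∏ j, (Function.update x i t i' - z j)) (x := s)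
          (fun i' _ => Finset.prod_ne_zero_iff.mpr fun j _ => hNf0 s hsz i' j)
          (fun i' _ => DifferentiableAt.fun_finsetProd fun j _ => hdNf i' j s)
      rw [e0]
      have e1 : ∀ i' : Fin k,
          logDeriv (fun t => ∏ j, (Function.update x i t i' - z j)) s
            = if i' = i then ∑ j, (s - z j)⁻¹ else 0 := by
        intro i'
        by_cases hii : i' = i
        · subst hii
          rw [if_pos rfl]
          simp only [Function.update_self]
          have e2 : logDeriv (fun t => ∏ j, (t - z j)) s
              = ∑ j, logDeriv (fun t => t - z j) s :=
            logDeriv_prod (s := univ) (f := fun j => fun t => t - z j) (x := s)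
              (fun j _ => sub_ne_zero.mpr (hsz j))
              (fun j _ => by fun_prop)
          rw [e2]
          refine Finset.sum_congr rfl fun j _ => ?_
          rw [logDeriv_apply, deriv_sub_const, deriv_id'', one_div]
        · rw [if_neg hii]
          simp only [Function.update_of_ne hii]
          exact congrFun (logDeriv_const _) s
      rw [Finset.sum_congr rfl fun i' _ => e1 i']
      rw [Finset.sum_ite_eq' univ i (fun _ => ∑ j, (s - z j)⁻¹)]
      simp
    have hlogD : logDeriv D s = ∑ j ∈ Finset.univ.erase i, (s - x j)⁻¹ := by
      have e0 : logDeriv D s = ∑ a, logDeriv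
          (fun t => ∏ b ∈ Finset.Ioi a,
            (Function.update x i t a - Function.update x i t b)) s := by
        rw [hD]
        exact logDeriv_prod (s := univ) (x := s)
          (fun a _ => Finset.prod_ne_zero_iff.mpr fun b hb =>
            hDf0 s hsx a b (Finset.mem_Ioi.mp hb))
          (fun a _ => DifferentiableAt.fun_finsetProd fun b _ => hdDf a b s)
      rw [e0]
      have e1 : ∀ a : Fin k, logDeriv
          (fun t => ∏ b ∈ Finset.Ioi a,
            (Function.update x i t a - Function.update x i t b)) s
          = ∑ b ∈ Finset.Ioi a, logDeriv
              (fun t => Function.update x i t a - Function.update x i t b) s := by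
        intro a
        exact logDeriv_prod (s := Finset.Ioi a) (x := s)
          (fun b hb => hDf0 s hsx a b (Finset.mem_Ioi.mp hb))
          (fun b _ => hdDf a b s)
      rw [Finset.sum_congr rfl fun a _ => e1 a]
      have e2 : ∀ a : Fin k, ∀ b ∈ Finset.Ioi a,
          logDeriv (fun t => Function.update x i t a - Function.update x i t b) s
            = (if a = i then (s - x b)⁻¹ else if b = i then (s - x a)⁻¹ else 0) := by
        intro a b hb
        have hab : a < b := Finset.mem_Ioi.mp hb
        by_cases ha : a = i
        · have hbne : b ≠ i := by rw [← ha]; exact (ne_of_gt hab)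
          rw [if_pos ha, ha]
          simp only [Function.update_self, Function.update_of_ne hbne]
          rw [logDeriv_apply, deriv_sub_const, deriv_id'', one_div]
        · rw [if_neg ha]
          by_cases hbi : b = i
          · rw [if_pos hbi, hbi]
            simp only [Function.update_self, Function.update_of_ne ha]
            rw [logDeriv_apply, deriv_const_sub, deriv_id'']
            rw [show x a - s = -(s - x a) by ring, div_neg, neg_div, neg_neg, one_div]
          · rw [if_neg hbi]
            simp only [Function.update_of_ne ha, Function.update_of_ne hbi]
            exact congrFun (logDeriv_const _) s
      rw [Finset.sum_congr rfl fun a _ => Finset.sum_congr rfl fun b hb => e2 a b hb]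
      exact pair_support i (fun j => (s - x j)⁻¹)
    have e1 : logDeriv (fun t => N t ^ m / (D t ^ m * Az ^ m)
        * Complex.exp (μ * (t + C - Sz))) s
        = logDeriv (fun t => N t ^ m / (D t ^ m * Az ^ m)) s
          + logDeriv (fun t => Complex.exp (μ * (t + C - Sz))) s :=
      logDeriv_mul s hratio0 (Complex.exp_ne_zero _) hdratio hdexp
    have e2 : logDeriv (fun t => N t ^ m / (D t ^ m * Az ^ m)) s
        = logDeriv (fun t => N t ^ m) s - logDeriv (fun t => D t ^ m * Az ^ m) s :=
      logDeriv_div s (pow_ne_zero _ hN0s) hden ((hdN s).pow m)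
        (((hdD s).pow m).mul_const _)
    have e3 : logDeriv (fun t => D t ^ m * Az ^ m) s
        = logDeriv (fun t => D t ^ m) s :=
      logDeriv_mul_const s _ (pow_ne_zero _ hAz0)
    have e4 : logDeriv (fun t => N t ^ m) s = m * logDeriv N s :=
      logDeriv_fun_pow (hdN s) m
    have e5 : logDeriv (fun t => D t ^ m) s = m * logDeriv D s :=
      logDeriv_fun_pow (hdD s) m
    have hlogh : logDeriv h s = φ s := by
      rw [hrepr, e1, e2, e3, e4, e5, hlogN, hlogD, hexps s]
      simp only [hφ]
      ring
    rw [← hlogh, logDeriv_apply, div_mul_cancel₀ _ hF0]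
  -- eventual identity near x i
  have hgood : ∀ᶠ s in nhds (x i), (∀ j, s ≠ z j) ∧ (∀ j, j ≠ i → s ≠ x j) := by
    have h1 : ∀ᶠ s in nhds (x i), ∀ j, s ≠ z j :=
      Filter.eventually_all.mpr fun j => eventually_ne_nhds (hxz i j)
    have h2 : ∀ᶠ s in nhds (x i), ∀ j, j ≠ i → s ≠ x j := by
      rw [Filter.eventually_all]
      intro j
      by_cases hj : j = i
      · exact Filter.Eventually.of_forall fun s hcon => absurd hj hcon
      · exact (eventually_ne_nhds (hx i j fun e => hj e.symm)).mono fun s hne _ => hne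
    exact h1.and h2
  have hev : deriv h =ᶠ[nhds (x i)] fun s => φ s * h s :=
    hgood.mono fun s hs => hkey s hs.1 hs.2
  have hgi : ∀ j, j ≠ i → x i ≠ x j := fun j hj => hx i j fun e => hj e.symm
  have hKxi : h (x i) = Kfun m μ x z := by
    simp only [hh, Function.update_eq_self]
  have hd1 : HasDerivAt (fun s : ℂ => ∑ j, (s - z j)⁻¹)
      (∑ j, -1 / ((x i - z j)^2)) (x i) :=
    HasDerivAt.fun_sum fun j _ =>
      ((hasDerivAt_id (x i)).sub_const (z j)).inv (sub_ne_zero.mpr (hxz i j))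
  have hd2 : HasDerivAt (fun s : ℂ => ∑ j ∈ Finset.univ.erase i, (s - x j)⁻¹)
      (∑ j ∈ Finset.univ.erase i, -1 / ((x i - x j)^2)) (x i) :=
    HasDerivAt.fun_sum fun j hj =>
      ((hasDerivAt_id (x i)).sub_const (x j)).inv
        (sub_ne_zero.mpr (hgi j (Finset.mem_erase.mp hj).1))
  have hφd : HasDerivAt φ ((m:ℂ) * (∑ j, -1 / ((x i - z j)^2))
      - (m:ℂ) * (∑ j ∈ Finset.univ.erase i, -1 / ((x i - x j)^2))) (x i) := by
    rw [hφ]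
    exact ((hd1.const_mul ((m:ℂ))).const_add μ).sub (hd2.const_mul ((m:ℂ)))
  have hhd : DifferentiableAt ℂ h (x i) := by
    rw [hrepr]
    refine DifferentiableAt.mul ?_ (by fun_prop)
    exact ((hdN _).pow m).div (((hdD _).pow m).mul_const _)
      (mul_ne_zero (pow_ne_zero _ (hD0 _ hgi)) (pow_ne_zero _ hAz0))
  have her1 : ∑ j ∈ Finset.univ.erase i, (-1 : ℂ) / ((x i - x j)^2)
      = ∑ j, -1 / ((x i - x j)^2) := Finset.sum_erase _ (by simp)
  have her2 : ∑ j ∈ Finset.univ.erase i, (x i - x j)⁻¹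
      = ∑ j, (x i - x j)⁻¹ := Finset.sum_erase _ (by simp)
  have hφval : φ (x i) = μ + (m:ℂ) * ∑ j, (x i - z j)⁻¹
      - (m:ℂ) * ∑ j, (x i - x j)⁻¹ := by
    simp only [hφ]
    rw [her2]
  calc deriv (deriv h) (x i) = deriv (fun s => φ s * h s) (x i) := hev.deriv_eq
    _ = deriv φ (x i) * h (x i) + φ (x i) * deriv h (x i) :=
        deriv_mul hφd.differentiableAt hhd
    _ = ((-(m:ℂ) * ∑ j, ((x i - z j)^2)⁻¹ + (m:ℂ) * ∑ j, ((x i - x j)^2)⁻¹)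
          + (μ + (m:ℂ) * ∑ j, (x i - z j)⁻¹ - (m:ℂ) * ∑ j, (x i - x j)⁻¹)^2)
        * Kfun m μ x z := by
        rw [hφd.deriv, hkey (x i) (fun j => hxz i j) hgi, hKxi, hφval, her1]
        have c1 : ∑ j, (-1 : ℂ) / ((x i - z j)^2) = -∑ j, ((x i - z j)^2)⁻¹ := by
          rw [← Finset.sum_neg_distrib]
          exact Finset.sum_congr rfl fun j _ => by rw [neg_div, one_div]
        have c2 : ∑ j, (-1 : ℂ) / ((x i - x j)^2) = -∑ j, ((x i - x j)^2)⁻¹ := by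
          rw [← Finset.sum_neg_distrib]
          exact Finset.sum_congr rfl fun j _ => by rw [neg_div, one_div]
        rw [c1, c2]
        ring

set_option maxHeartbeats 1000000 in
lemma scalar_identity (m : ℕ) (μ : ℂ) {k p : ℕ} (x : Fin k → ℂ) (z : Fin p → ℂ)
    (hx : ∀ i j, i ≠ j → x i ≠ x j) (hz : ∀ i j, i ≠ j → z i ≠ z j)
    (hxz : ∀ i j, x i ≠ z j) :
    -(∑ i, ((-(m:ℂ) * ∑ j, ((x i - z j)^2)⁻¹ + (m:ℂ) * ∑ j, ((x i - x j)^2)⁻¹)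
        + (μ + (m:ℂ) * ∑ j, (x i - z j)⁻¹ - (m:ℂ) * ∑ j, (x i - x j)⁻¹)^2))
      + ∑ i, ∑ j ∈ Finset.Ioi i, 2*(m:ℂ)*((m:ℂ)+1) / (x i - x j)^2
    = -(∑ j, ((-(m:ℂ) * ∑ i, ((z j - x i)^2)⁻¹ + (m:ℂ) * ∑ l, ((z j - z l)^2)⁻¹)
        + (-μ + (m:ℂ) * ∑ i, (z j - x i)⁻¹ - (m:ℂ) * ∑ l, (z j - z l)⁻¹)^2))
      + ∑ i, ∑ j ∈ Finset.Ioi i, 2*(m:ℂ)*((m:ℂ)+1) / (z i - z j)^2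
      + μ^2 * ((p:ℂ) - (k:ℂ)) := by
  set M := (m:ℂ) with hM
  -- normalize powers and divisions to inverses
  simp only [div_eq_mul_inv, ← inv_pow]
  -- atoms
  set R2 := ∑ i, ∑ j, ((x i - z j)⁻¹)^2 with hR2
  set P2 := ∑ i, ∑ j, ((x i - x j)⁻¹)^2 with hP2
  set Q2 := ∑ j, ∑ l, ((z j - z l)⁻¹)^2 with hQ2
  set SA := ∑ i, ∑ j, (x i - z j)⁻¹ with hSA
  set U := ∑ i, ∑ i', ∑ j, (if i = i' then 0 else (x i - z j)⁻¹ * (x i' - z j)⁻¹) with hU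
  set V := ∑ i, ∑ j, ∑ l, (if j = l then 0 else (x i - z j)⁻¹ * (x i - z l)⁻¹) with hV
  -- z-side rewrites: (z j - x i) = -(x i - z j)
  have hneg : ∀ (i : Fin k) (j : Fin p), (z j - x i)⁻¹ = -(x i - z j)⁻¹ := by
    intro i j; rw [show z j - x i = -(x i - z j) by ring, inv_neg]
  have hnegsq : ∀ (i : Fin k) (j : Fin p), ((z j - x i)⁻¹)^2 = ((x i - z j)⁻¹)^2 := by
    intro i j; rw [hneg, neg_sq]
  -- facts
  have F_SB : ∑ i, ∑ j, (x i - x j)⁻¹ = 0 := by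
    refine sum_antisym _ fun i j => ?_
    rw [show x i - x j = -(x j - x i) by ring, inv_neg]
  have F_SD : ∑ j, ∑ l, (z j - z l)⁻¹ = 0 := by
    refine sum_antisym _ fun i j => ?_
    rw [show z i - z j = -(z j - z i) by ring, inv_neg]
  have F_SB2 : ∑ i, (∑ j, (x i - x j)⁻¹)^2 = P2 := by
    have e : ∀ i : Fin k, (∑ j, (x i - x j)⁻¹)^2
        = ∑ j, ∑ l, (x i - x j)⁻¹ * (x i - x l)⁻¹ := by
      intro i; rw [sq, sum_mul_sum']
    rw [Finset.sum_congr rfl fun i _ => (e i).trans (sum_split_diag _)]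
    rw [Finset.sum_add_distrib, triple_cancel x hx, add_zero, hP2]
    exact Finset.sum_congr rfl fun i _ => Finset.sum_congr rfl fun j _ => (sq _).symm
  have F_SD2 : ∑ j, (∑ l, (z j - z l)⁻¹)^2 = Q2 := by
    have e : ∀ j : Fin p, (∑ l, (z j - z l)⁻¹)^2
        = ∑ l, ∑ l', (z j - z l)⁻¹ * (z j - z l')⁻¹ := by
      intro j; rw [sq, sum_mul_sum']
    rw [Finset.sum_congr rfl fun j _ => (e j).trans (sum_split_diag _)]
    rw [Finset.sum_add_distrib, triple_cancel z hz, add_zero, hQ2]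
    exact Finset.sum_congr rfl fun i _ => Finset.sum_congr rfl fun j _ => (sq _).symm
  have F_SA2 : ∑ i, (∑ j, (x i - z j)⁻¹)^2 = R2 + V := by
    have e : ∀ i : Fin k, (∑ j, (x i - z j)⁻¹)^2
        = ∑ j, ∑ l, (x i - z j)⁻¹ * (x i - z l)⁻¹ := by
      intro i; rw [sq, sum_mul_sum']
    rw [Finset.sum_congr rfl fun i _ => (e i).trans (sum_split_diag _)]
    rw [Finset.sum_add_distrib, hR2, hV]
    congr 1
    exact Finset.sum_congr rfl fun i _ => Finset.sum_congr rfl fun j _ => (sq _).symm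
  have F_SC2 : ∑ j, (∑ i, (x i - z j)⁻¹)^2 = R2 + U := by
    have e : ∀ j : Fin p, (∑ i, (x i - z j)⁻¹)^2
        = ∑ i, ∑ i', (x i - z j)⁻¹ * (x i' - z j)⁻¹ := by
      intro j; rw [sq, sum_mul_sum']
    rw [Finset.sum_congr rfl fun j _ => (e j).trans (sum_split_diag _)]
    rw [Finset.sum_add_distrib]
    congr 1
    · rw [hR2, Finset.sum_comm]
      exact Finset.sum_congr rfl fun j _ => Finset.sum_congr rfl fun i _ => (sq _).symm
    · rw [hU]
      exact sum3_rot (fun (a : Fin p) (b c : Fin k) => if b = c then 0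
        else (x b - z a)⁻¹ * (x c - z a)⁻¹)
  have F_SC : ∑ j, ∑ i, (x i - z j)⁻¹ = SA := by rw [hSA]; exact Finset.sum_comm
  have F_SAB : 2 * ∑ i, (∑ j, (x i - z j)⁻¹) * (∑ j, (x i - x j)⁻¹) = -U :=
    mixed_x x z hx hxz
  have F_SCD : 2 * ∑ j, (∑ i, (x i - z j)⁻¹) * (∑ l, (z j - z l)⁻¹) = V := by
    rw [mixed_z x z hz hxz, hV]
    rw [sum3_rot (fun (a b : Fin p) (c : Fin k) => if a = b then 0
      else (x c - z a)⁻¹ * (x c - z b)⁻¹)]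
    exact sum3_rot (fun (b : Fin p) (c : Fin k) (a : Fin p) => if a = b then 0
      else (x c - z a)⁻¹ * (x c - z b)⁻¹)
  have F_IX : 2 * ∑ i, ∑ j ∈ Finset.Ioi i, ((x i - x j)⁻¹)^2 = P2 := by
    rw [hP2]
    refine sum_Ioi_sym _ (fun i j => ?_) (fun i => by simp)
    rw [show x i - x j = -(x j - x i) by ring, inv_neg, neg_sq]
  have F_IZ : 2 * ∑ i, ∑ j ∈ Finset.Ioi i, ((z i - z j)⁻¹)^2 = Q2 := by
    rw [hQ2]
    refine sum_Ioi_sym _ (fun i j => ?_) (fun i => by simp)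
    rw [show z i - z j = -(z j - z i) by ring, inv_neg, neg_sq]
  have F_R : ∑ j, ∑ i, ((x i - z j)⁻¹)^2 = R2 := by rw [hR2]; exact Finset.sum_comm
  -- expansions
  have expand_x : ∑ i, ((-M * ∑ j, ((x i - z j)⁻¹)^2 + M * ∑ j, ((x i - x j)⁻¹)^2)
      + (μ + M * ∑ j, (x i - z j)⁻¹ - M * ∑ j, (x i - x j)⁻¹)^2)
      = -M * R2 + M * P2 + ((k:ℂ)*μ^2 + M^2*(∑ i, (∑ j, (x i - z j)⁻¹)^2)
        + M^2*(∑ i, (∑ j, (x i - x j)⁻¹)^2) + 2*μ*M*SA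
        - 2*μ*M*(∑ i, ∑ j, (x i - x j)⁻¹)
        - M^2*(2 * ∑ i, (∑ j, (x i - z j)⁻¹) * (∑ j, (x i - x j)⁻¹))) := by
    have e : ∀ i : Fin k, ((-M * ∑ j, ((x i - z j)⁻¹)^2 + M * ∑ j, ((x i - x j)⁻¹)^2)
        + (μ + M * ∑ j, (x i - z j)⁻¹ - M * ∑ j, (x i - x j)⁻¹)^2)
        = -M * ∑ j, ((x i - z j)⁻¹)^2 + (M * ∑ j, ((x i - x j)⁻¹)^2
          + (μ^2 + (M^2*(∑ j, (x i - z j)⁻¹)^2 + (M^2*(∑ j, (x i - x j)⁻¹)^2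
          + (2*μ*M*(∑ j, (x i - z j)⁻¹)
            - (2*μ*M*(∑ j, (x i - x j)⁻¹)
              + 2*M^2*((∑ j, (x i - z j)⁻¹) * (∑ j, (x i - x j)⁻¹)))))))) := by
      intro i; ring
    rw [Finset.sum_congr rfl fun i _ => e i]
    simp only [Finset.sum_add_distrib, Finset.sum_sub_distrib, ← Finset.mul_sum,
      Finset.sum_const, Finset.card_univ, Fintype.card_fin, nsmul_eq_mul]
    rw [hSA, hR2, hP2]
    ring
  have expand_z : ∑ j, ((-M * ∑ i, ((z j - x i)⁻¹)^2 + M * ∑ l, ((z j - z l)⁻¹)^2)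
      + (-μ + M * ∑ i, (z j - x i)⁻¹ - M * ∑ l, (z j - z l)⁻¹)^2)
      = -M * R2 + M * Q2 + ((p:ℂ)*μ^2 + M^2*(∑ j, (∑ i, (x i - z j)⁻¹)^2)
        + M^2*(∑ j, (∑ l, (z j - z l)⁻¹)^2) + 2*μ*M*(∑ j, ∑ i, (x i - z j)⁻¹)
        + 2*μ*M*(∑ j, ∑ l, (z j - z l)⁻¹)
        + M^2*(2 * ∑ j, (∑ i, (x i - z j)⁻¹) * (∑ l, (z j - z l)⁻¹))) := by
    have e : ∀ j : Fin p, ((-M * ∑ i, ((z j - x i)⁻¹)^2 + M * ∑ l, ((z j - z l)⁻¹)^2)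
        + (-μ + M * ∑ i, (z j - x i)⁻¹ - M * ∑ l, (z j - z l)⁻¹)^2)
        = ((-M * ∑ i, ((x i - z j)⁻¹)^2 + M * ∑ l, ((z j - z l)⁻¹)^2)
          + (μ + M * ∑ i, (x i - z j)⁻¹ + M * ∑ l, (z j - z l)⁻¹)^2) := by
      intro j
      have h1 : ∑ i, ((z j - x i)⁻¹)^2 = ∑ i, ((x i - z j)⁻¹)^2 :=
        Finset.sum_congr rfl fun i _ => hnegsq i j
      have h2 : ∑ i, (z j - x i)⁻¹ = -∑ i, (x i - z j)⁻¹ := by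
        rw [← Finset.sum_neg_distrib]
        exact Finset.sum_congr rfl fun i _ => hneg i j
      rw [h1, h2]; ring
    rw [Finset.sum_congr rfl fun j _ => e j]
    have e2 : ∀ j : Fin p, ((-M * ∑ i, ((x i - z j)⁻¹)^2 + M * ∑ l, ((z j - z l)⁻¹)^2)
        + (μ + M * ∑ i, (x i - z j)⁻¹ + M * ∑ l, (z j - z l)⁻¹)^2)
        = -M * ∑ i, ((x i - z j)⁻¹)^2 + (M * ∑ l, ((z j - z l)⁻¹)^2
          + (μ^2 + (M^2*(∑ i, (x i - z j)⁻¹)^2 + (M^2*(∑ l, (z j - z l)⁻¹)^2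
          + (2*μ*M*(∑ i, (x i - z j)⁻¹) + (2*μ*M*(∑ l, (z j - z l)⁻¹)
            + 2*M^2*((∑ i, (x i - z j)⁻¹) * (∑ l, (z j - z l)⁻¹)))))))) := by
      intro j; ring
    rw [Finset.sum_congr rfl fun j _ => e2 j]
    simp only [Finset.sum_add_distrib, Finset.sum_sub_distrib, ← Finset.mul_sum,
      Finset.sum_const, Finset.card_univ, Fintype.card_fin, nsmul_eq_mul]
    rw [F_R, hQ2]
    ring
  rw [expand_x, expand_z]
  rw [F_SB, F_SB2, F_SD2, F_SA2, F_SC2, F_SC, F_SAB, F_SCD]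
  have hD0 : ∑ j, ∑ l, (z j - z l)⁻¹ = 0 := F_SD
  rw [hD0]
  have pullx : ∑ i, ∑ j ∈ Finset.Ioi i, 2*M*(M+1) * ((x i - x j)⁻¹)^2
      = 2*M*(M+1) * ∑ i, ∑ j ∈ Finset.Ioi i, ((x i - x j)⁻¹)^2 := by
    simp only [← Finset.mul_sum]
  have pullz : ∑ i, ∑ j ∈ Finset.Ioi i, 2*M*(M+1) * ((z i - z j)⁻¹)^2
      = 2*M*(M+1) * ∑ i, ∑ j ∈ Finset.Ioi i, ((z i - z j)⁻¹)^2 := by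
    simp only [← Finset.mul_sum]
  rw [pullx, pullz]
  linear_combination ((M:ℂ)*(M+1)) * F_IX - (M*(M+1)) * F_IZ

end RationalKernelHelpers

/-- The rational Stanley–Macdonald kernel identity: with
`K(x;z) = A(x,z)^m / (A(x)^m A(z)^m) · exp(μ(x̄ - z̄))` one has
`L_m^{(k)}(x) K = L_m^{(p)}(z) K + μ²(p - k) K`. -/
theorem rational_kernel_identity (m : ℕ) (hm : 0 < m) (μ : ℂ) (k p : ℕ)
    (x : Fin k → ℂ) (z : Fin p → ℂ)
    (hx : ∀ i j, i ≠ j → x i ≠ x j) (hz : ∀ i j, i ≠ j → z i ≠ z j)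
    (hxz : ∀ i j, x i ≠ z j)
    (K : (Fin k → ℂ) → (Fin p → ℂ) → ℂ)
    (hK : K = fun X Z =>
      (∏ i, ∏ j, (X i - Z j)) ^ m
        / ((∏ i, ∏ j ∈ Finset.Ioi i, (X i - X j)) ^ m
            * (∏ i, ∏ j ∈ Finset.Ioi i, (Z i - Z j)) ^ m)
        * Complex.exp (μ * (∑ i, X i - ∑ i, Z i))) :
    -(∑ i, deriv (deriv (fun s => K (Function.update x i s) z)) (x i))
      + (∑ i, ∑ j ∈ Finset.Ioi i, 2 * (m : ℂ) * ((m : ℂ) + 1) / (x i - x j) ^ 2) * K x z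
    = -(∑ i, deriv (deriv (fun s => K x (Function.update z i s))) (z i))
        + (∑ i, ∑ j ∈ Finset.Ioi i, 2 * (m : ℂ) * ((m : ℂ) + 1) / (z i - z j) ^ 2) * K x z
        + μ ^ 2 * ((p : ℂ) - (k : ℂ)) * K x z := by
  have hKK : K = fun X Z => Kfun m μ X Z := hK
  rw [hKK]
  simp only []
  have hxside : ∀ i : Fin k,
      deriv (deriv (fun s => Kfun m μ (Function.update x i s) z)) (x i)
        = ((-(m:ℂ) * ∑ j, ((x i - z j)^2)⁻¹ + (m:ℂ) * ∑ j, ((x i - x j)^2)⁻¹)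
            + (μ + (m:ℂ) * ∑ j, (x i - z j)⁻¹ - (m:ℂ) * ∑ j, (x i - x j)⁻¹)^2)
          * Kfun m μ x z := fun i => side m μ x z hx hz hxz i
  have hzside : ∀ j : Fin p,
      deriv (deriv (fun s => Kfun m μ x (Function.update z j s))) (z j)
        = ((-(m:ℂ) * ∑ i, ((z j - x i)^2)⁻¹ + (m:ℂ) * ∑ l, ((z j - z l)^2)⁻¹)
            + (-μ + (m:ℂ) * ∑ i, (z j - x i)⁻¹ - (m:ℂ) * ∑ l, (z j - z l)⁻¹)^2)
          * Kfun m μ x z := by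
    intro j
    have hfun : (fun s => Kfun m μ x (Function.update z j s))
        = fun s => (-1 : ℂ)^(k*p*m) * Kfun m (-μ) (Function.update z j s) x := by
      funext s
      exact Kswap m μ x (Function.update z j s)
    rw [hfun, deriv_const_mul_field', deriv_const_mul_field,
      side m (-μ) z x hz hx (fun a b => (hxz b a).symm) j, Kswap m μ x z]
    ring
  rw [Finset.sum_congr rfl fun i _ => hxside i,
    Finset.sum_congr rfl fun j _ => hzside j, ← Finset.sum_mul, ← Finset.sum_mul]
  have hid := scalar_identity m μ x z hx hz hxz
  linear_combination (Kfun m μ x z) * hid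
end

section
/- For positive integer m, the two integral representations of Ψ^{(2)}_m agree: for x₁ ≠ x₂ and Re(λ₁−λ₂) < 0, λ₁ ≠ λ₂, (λ₂−λ₁)^{m+1}/(m!(x₁−x₂)^m) · ∫_{x₁}^{∞}(z−x₁)^m(z−x₂)^m e^{(λ₁−λ₂)z}dz = m!(x₁−x₂)^{m+1}/(λ₁−λ₂)^m · Res_{z=x₁}[ e^{(λ₁−λ₂)z} / ((z−x₁)^{m+1}(z−x₂)^{m+1}) ]. -/
open Complex MeasureTheory Set Filter

private lemma BA_integrable (n : ℕ) {μ : ℂ} (hμ : μ.re < 0) :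
    IntegrableOn (fun t : ℝ => (t : ℂ) ^ n * Complex.exp (μ * t)) (Ioi (0:ℝ)) := by
  have hb : (0:ℝ) < -μ.re / 2 := by linarith
  have hreal : IntegrableOn (fun t : ℝ => |t| ^ n * Real.exp (μ.re * t)) (Ioi (0:ℝ)) := by
    apply integrable_of_isBigO_exp_neg hb
    · exact (by fun_prop : Continuous fun t : ℝ => |t| ^ n * Real.exp (μ.re * t)).continuousOn
    · have : Tendsto (fun t : ℝ => |t| ^ n * Real.exp (μ.re * t) / Real.exp (-(-μ.re/2) * t))
          atTop (nhds 0) := by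
        have h1 : ∀ᶠ t : ℝ in atTop, |t| ^ n * Real.exp (μ.re * t) / Real.exp (-(-μ.re/2) * t)
            = t ^ n * Real.exp (μ.re / 2 * t) := by
          filter_upwards [eventually_ge_atTop (0:ℝ)] with t ht
          rw [_root_.abs_of_nonneg ht, mul_div_assoc, ← Real.exp_sub]
          congr 2
          ring
        rw [tendsto_congr' h1]
        have h2 : Tendsto (fun t : ℝ => (-2/μ.re)^n * ((-μ.re/2 * t) ^ n *
            Real.exp (-(-μ.re/2 * t)))) atTop (nhds 0) := by
          have := (Real.tendsto_pow_mul_exp_neg_atTop_nhds_zero n).comp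
            (tendsto_id.const_mul_atTop hb)
          simpa using (this.const_mul ((-2/μ.re)^n))
        refine h2.congr fun t => ?_
        have hne : μ.re ≠ 0 := by linarith
        rw [← mul_assoc, ← mul_pow]
        congr 2
        · field_simp
        · ring
      have := (Asymptotics.isLittleO_iff_tendsto fun x h =>
        absurd h (Real.exp_ne_zero _)).mpr this
      exact this.isBigO
  refine (hreal.const_mul 1).mono' ?_ ?_
  · exact (Continuous.aestronglyMeasurable (by continuity)).restrict
  · filter_upwards with t
    simp only [norm_mul, norm_pow, one_mul]
    rw [Complex.norm_exp]
    have : (μ * t).re = μ.re * t := by simp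
    rw [this, Complex.norm_real, Real.norm_eq_abs]

private lemma BA_tendsto (n : ℕ) {μ : ℂ} (hμ : μ.re < 0) :
    Tendsto (fun t : ℝ => (t : ℂ) ^ n * Complex.exp (μ * t)) atTop (nhds 0) := by
  rw [tendsto_zero_iff_norm_tendsto_zero]
  have hb : (0:ℝ) < -μ.re := by linarith
  have h2 : Tendsto (fun t : ℝ => (-μ.re)⁻¹ ^ n * ((-μ.re * t) ^ n *
      Real.exp (-(-μ.re * t)))) atTop (nhds 0) := by
    have := (Real.tendsto_pow_mul_exp_neg_atTop_nhds_zero n).comp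
      (tendsto_id.const_mul_atTop hb)
    simpa using this.const_mul ((-μ.re)⁻¹ ^ n)
  have h3 : Tendsto (fun t : ℝ => t ^ n * Real.exp (μ.re * t)) atTop (nhds 0) := by
    refine h2.congr fun t => ?_
    have hne : μ.re ≠ 0 := by linarith
    rw [← mul_assoc, ← mul_pow]
    congr 2
    · field_simp
    · ring
  refine squeeze_zero_norm' ?_ h3
  filter_upwards [eventually_ge_atTop (0:ℝ)] with t ht
  have h4 : ‖(t:ℂ)^n * Complex.exp (μ * t)‖ = t^n * Real.exp (μ.re * t) := by
    simp [Complex.norm_exp, _root_.abs_of_nonneg ht]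
  rw [norm_norm, h4]

private lemma BA_J {μ : ℂ} (hμ : μ.re < 0) : ∀ n : ℕ,
    (∫ t in Ioi (0:ℝ), (t:ℂ)^n * Complex.exp (μ * t)) = (n.factorial : ℂ) / (-μ)^(n+1) := by
  have hμ0 : μ ≠ 0 := fun h => by simp [h] at hμ
  intro n
  induction n with
  | zero =>
    have hd : ∀ t : ℝ, HasDerivAt (fun s : ℝ => Complex.exp (μ * s) / μ)
        ((t:ℂ)^0 * Complex.exp (μ * t)) t := by
      intro t
      have : HasDerivAt (fun z : ℂ => Complex.exp (μ * z) / μ)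
          ((t:ℂ)^0 * Complex.exp (μ * t)) (t:ℂ) := by
        have := (((hasDerivAt_id (t:ℂ)).const_mul μ).cexp).div_const μ
        simpa [mul_comm, hμ0] using this
      exact this.comp_ofReal
    have := integral_Ioi_of_hasDerivAt_of_tendsto' (m := 0) (f' := fun t : ℝ => (t:ℂ)^0 * Complex.exp (μ * t))
      (fun t _ => hd t) (BA_integrable 0 hμ) ?_
    · rw [this]
      simp [Nat.factorial, inv_neg]
    · have h0 := BA_tendsto 0 hμ
      simp only [pow_zero, one_mul] at h0
      simpa using h0.div_const μ
  | succ n ih =>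
    have hd : ∀ t : ℝ, HasDerivAt (fun s : ℝ => ((s:ℂ))^(n+1) * Complex.exp (μ * s))
        (((n:ℂ)+1) * ((t:ℂ)^n * Complex.exp (μ * t)) + μ * ((t:ℂ)^(n+1) * Complex.exp (μ * t))) t := by
      intro t
      have : HasDerivAt (fun z : ℂ => z^(n+1) * Complex.exp (μ * z))
          (((n:ℂ)+1) * ((t:ℂ)^n * Complex.exp (μ * t)) + μ * ((t:ℂ)^(n+1) * Complex.exp (μ * t))) (t:ℂ) := by
        have h1 : HasDerivAt (fun z : ℂ => z^(n+1)) (((n:ℂ)+1) * (t:ℂ)^n) (t:ℂ) := by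
          simpa using hasDerivAt_pow (n+1) (t:ℂ)
        have h2 : HasDerivAt (fun z : ℂ => Complex.exp (μ * z)) (μ * Complex.exp (μ * t)) (t:ℂ) := by
          simpa [mul_comm] using ((hasDerivAt_id (t:ℂ)).const_mul μ).cexp
        have := h1.mul h2
        exact this.congr_deriv (by ring)
      exact this.comp_ofReal
    have hint : IntegrableOn (fun t : ℝ =>
        ((n:ℂ)+1) * ((t:ℂ)^n * Complex.exp (μ * t)) + μ * ((t:ℂ)^(n+1) * Complex.exp (μ * t)))
        (Ioi (0:ℝ)) := ((BA_integrable n hμ).const_mul _).add ((BA_integrable (n+1) hμ).const_mul _)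
    have key := integral_Ioi_of_hasDerivAt_of_tendsto' (fun t _ => hd t) hint (BA_tendsto (n+1) hμ)
    rw [MeasureTheory.integral_add ((BA_integrable n hμ).const_mul _)
      ((BA_integrable (n+1) hμ).const_mul _), MeasureTheory.integral_const_mul,
      MeasureTheory.integral_const_mul, ih] at key
    simp only [Complex.ofReal_zero, ne_eq, zero_pow, Nat.succ_ne_zero, not_false_iff, mul_zero,
      zero_mul, sub_zero] at key
    have hne : (-μ)^(n+1) ≠ 0 := pow_ne_zero _ (neg_ne_zero.mpr hμ0)
    have hne2 : (-μ)^(n+1+1) ≠ 0 := pow_ne_zero _ (neg_ne_zero.mpr hμ0)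
    have : μ * ∫ t in Ioi (0:ℝ), (t:ℂ)^(n+1) * Complex.exp (μ * t)
        = -(((n:ℂ)+1) * ((n.factorial : ℂ) / (-μ)^(n+1))) := by
      rw [eq_neg_iff_add_eq_zero, add_comm]
      convert key using 2
    have hval : (∫ t in Ioi (0:ℝ), (t:ℂ)^(n+1) * Complex.exp (μ * t))
        = ((n+1).factorial : ℂ) / (-μ)^(n+1+1) := by
      have := congrArg (fun z => μ⁻¹ * z) this
      simp only [inv_mul_cancel_left₀ hμ0] at this
      rw [this, Nat.factorial_succ]
      push_cast
      field_simp
      ring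
    exact hval


open intervalIntegral Metric in
private lemma BA_circle_primitive (c : ℂ) {R : ℝ} (hR : 0 < R) (F f : ℂ → ℂ)
    (h : ∀ z ∈ sphere c R, HasDerivAt F (f z) z)
    (hc : ContinuousOn f (sphere c R)) :
    (∮ z in C(c, R), f z) = 0 := by
  have hmem : ∀ θ : ℝ, circleMap c R θ ∈ sphere c R := circleMap_mem_sphere c hR.le
  have key : ∀ θ ∈ Set.uIcc (0:ℝ) (2*Real.pi), HasDerivAt (fun θ => F (circleMap c R θ))
      (deriv (circleMap c R) θ • f (circleMap c R θ)) θ := by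
    intro θ _
    have h1 := hasDerivAt_circleMap c R θ
    have h2 := (h _ (hmem θ)).comp θ h1
    have h3 : HasDerivAt (fun θ => F (circleMap c R θ))
        (f (circleMap c R θ) * (circleMap 0 R θ * Complex.I)) θ := h2
    rw [deriv_circleMap, smul_eq_mul, mul_comm]
    exact h3
  have hcont : ContinuousOn (fun θ : ℝ => deriv (circleMap c R) θ • f (circleMap c R θ))
      (Set.uIcc (0:ℝ) (2*Real.pi)) := by
    have heq : (fun θ : ℝ => deriv (circleMap c R) θ • f (circleMap c R θ))
        = fun θ : ℝ => (circleMap 0 R θ * Complex.I) * f (circleMap c R θ) := by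
      funext θ; rw [deriv_circleMap, smul_eq_mul]
    rw [heq]
    exact (((continuous_circleMap 0 R).mul continuous_const).continuousOn).mul
      (hc.comp (continuous_circleMap c R).continuousOn (fun θ _ => hmem θ))
  rw [circleIntegral, intervalIntegral.integral_eq_sub_of_hasDerivAt key
    (hcont.intervalIntegrable)]
  have : circleMap c R (2*Real.pi) = circleMap c R 0 := by
    simpa using (periodic_circleMap c R) 0
  simp [this]

private lemma BA_pascal (μ : ℂ) (j q : ℕ) (A : ℕ → ℂ) :
    ∑ i ∈ Finset.range (j+2), (((j+1).choose i : ℕ) : ℂ) * μ^(j+1-i) * (-1)^i *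
        ((q+i).factorial : ℂ) * A i
      = μ * ∑ i ∈ Finset.range (j+1), ((j.choose i : ℕ) : ℂ) * μ^(j-i) * (-1)^i *
          ((q+i).factorial : ℂ) * A i
        - ∑ i ∈ Finset.range (j+1), ((j.choose i : ℕ) : ℂ) * μ^(j-i) * (-1)^i *
            ((q+1+i).factorial : ℂ) * A (i+1) := by
  rw [Finset.sum_range_succ' _ (j+1)]
  have split : (∑ i ∈ Finset.range (j+1), (((j+1).choose (i+1) : ℕ) : ℂ) * μ^(j+1-(i+1)) *
        (-1)^(i+1) * ((q+(i+1)).factorial : ℂ) * A (i+1))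
      = (∑ i ∈ Finset.range (j+1), ((j.choose (i+1) : ℕ) : ℂ) * μ^(j-i) * (-1)^(i+1) *
          ((q+1+i).factorial : ℂ) * A (i+1))
        + ∑ i ∈ Finset.range (j+1), ((j.choose i : ℕ) : ℂ) * μ^(j-i) * (-1)^(i+1) *
            ((q+1+i).factorial : ℂ) * A (i+1) := by
    rw [← Finset.sum_add_distrib]
    refine Finset.sum_congr rfl fun i _ => ?_
    have hch : (((j+1).choose (i+1) : ℕ) : ℂ) = ((j.choose i : ℕ) : ℂ) + ((j.choose (i+1) : ℕ) : ℂ) := by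
      push_cast [Nat.choose_succ_succ]
      ring
    have h1 : j+1-(i+1) = j-i := by omega
    have h2 : q+(i+1) = q+1+i := by omega
    rw [hch, h1, h2]
    ring
  rw [split]
  have h3 : (∑ i ∈ Finset.range (j+1), ((j.choose (i+1) : ℕ) : ℂ) * μ^(j-i) * (-1)^(i+1) *
        ((q+1+i).factorial : ℂ) * A (i+1))
      + (((j+1).choose 0 : ℕ) : ℂ) * μ^(j+1-0) * (-1)^0 * ((q+0).factorial : ℂ) * A 0
      = μ * ∑ i ∈ Finset.range (j+1), ((j.choose i : ℕ) : ℂ) * μ^(j-i) * (-1)^i *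
          ((q+i).factorial : ℂ) * A i := by
    rw [Finset.mul_sum, Finset.sum_range_succ' (fun i => μ * (((j.choose i : ℕ) : ℂ) * μ^(j-i) *
      (-1)^i * ((q+i).factorial : ℂ) * A i)) j]
    rw [Finset.sum_range_succ]
    simp only [Nat.choose_succ_self, Nat.cast_zero, zero_mul, mul_zero, add_zero]
    congr 1
    · refine Finset.sum_congr rfl fun i hi => ?_
      have hij : i < j := Finset.mem_range.mp hi
      have h1 : j - i = (j - (i+1)) + 1 := by omega
      have h2 : q + (i+1) = q+1+i := by omega
      rw [h1, h2, pow_succ]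
      ring
    · simp
      ring
  have h4 : (∑ i ∈ Finset.range (j+1), ((j.choose i : ℕ) : ℂ) * μ^(j-i) * (-1)^(i+1) *
        ((q+1+i).factorial : ℂ) * A (i+1))
      = - ∑ i ∈ Finset.range (j+1), ((j.choose i : ℕ) : ℂ) * μ^(j-i) * (-1)^i *
          ((q+1+i).factorial : ℂ) * A (i+1) := by
    rw [← Finset.sum_neg_distrib]
    refine Finset.sum_congr rfl fun i _ => ?_
    rw [pow_succ]
    ring
  linear_combination h3 + h4

private lemma BA_inv_pow_helper {w : ℂ} (hw : w ≠ 0) (n : ℕ) (c : ℂ) :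
    -(c * w^n) / (w^(n+1))^2 = -(c * (w^(n+2))⁻¹) := by
  rw [← pow_mul]
  have h : (n+1)*2 = n + (n+2) := by omega
  rw [h, pow_add]
  field_simp

open Metric in
private lemma BA_circle (x₁ x₂ μ : ℂ) {ε : ℝ} (hε : 0 < ε)
    (hε' : ε < ‖x₁ - x₂‖) :
    ∀ j q : ℕ,
    (∮ z in C(x₁, ε), Complex.exp (μ * z) / ((z - x₁)^(j+1) * (z - x₂)^(q+1)))
      = (2 * Real.pi * Complex.I) * Complex.exp (μ * x₁) *
          ((j.factorial : ℂ) * (q.factorial : ℂ))⁻¹ *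
          ∑ i ∈ Finset.range (j+1), ((j.choose i : ℕ) : ℂ) * μ^(j-i) * (-1)^i *
            ((q+i).factorial : ℂ) * ((x₁ - x₂)^(q+1+i))⁻¹ := by
  have hball : ∀ z ∈ closedBall x₁ ε, z ≠ x₂ := by
    intro z hz heq
    rw [mem_closedBall, Complex.dist_eq, heq] at hz
    have h2 : ‖x₁ - x₂‖ ≤ ε := by
      calc ‖x₁ - x₂‖ = ‖-(x₂ - x₁)‖ := by ring_nf
        _ = ‖x₂ - x₁‖ := by rw [norm_neg]
        _ ≤ ε := hz
    linarith
  have hsphere1 : ∀ z ∈ sphere x₁ ε, z ≠ x₁ := by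
    intro z hz heq
    rw [mem_sphere, Complex.dist_eq, heq, sub_self] at hz
    simp at hz
    linarith
  have hsphere2 : ∀ z ∈ sphere x₁ ε, z ≠ x₂ :=
    fun z hz => hball z (sphere_subset_closedBall hz)
  have hcont : ∀ p q' : ℕ, ContinuousOn
      (fun z => Complex.exp (μ * z) / ((z - x₁)^(p+1) * (z - x₂)^(q'+1))) (sphere x₁ ε) := by
    intro p q'
    apply ContinuousOn.div
    · exact (Complex.continuous_exp.comp (continuous_const.mul continuous_id)).continuousOn
    · exact (((continuous_id.sub continuous_const).pow _).mul
        ((continuous_id.sub continuous_const).pow _)).continuousOn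
    · intro z hz
      exact mul_ne_zero (pow_ne_zero _ (sub_ne_zero.mpr (hsphere1 z hz)))
        (pow_ne_zero _ (sub_ne_zero.mpr (hsphere2 z hz)))
  have hci : ∀ p q' : ℕ, CircleIntegrable
      (fun z => Complex.exp (μ * z) / ((z - x₁)^(p+1) * (z - x₂)^(q'+1))) x₁ ε :=
    fun p q' => (hcont p q').circleIntegrable hε.le
  intro j
  induction j with
  | zero =>
    intro q
    have hd : DifferentiableOn ℂ (fun z => Complex.exp (μ * z) * ((z - x₂)^(q+1))⁻¹)
        (closedBall x₁ ε) := by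
      apply DifferentiableOn.mul
      · exact (Complex.differentiable_exp.comp ((differentiable_const μ).mul
          differentiable_id)).differentiableOn
      · apply DifferentiableOn.inv
        · exact ((differentiable_id.sub (differentiable_const x₂)).pow _).differentiableOn
        · exact fun z hz => pow_ne_zero _ (sub_ne_zero.mpr (hball z hz))
    have key := hd.circleIntegral_sub_inv_smul (mem_ball_self hε)
    have heq : (fun z => Complex.exp (μ * z) / ((z - x₁)^(0+1) * (z - x₂)^(q+1)))
        = fun z => (z - x₁)⁻¹ • (Complex.exp (μ * z) * ((z - x₂)^(q+1))⁻¹) := by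
      funext z
      simp only [smul_eq_mul, div_eq_mul_inv, mul_inv, pow_one]
      ring
    rw [heq, key]
    have hfq : ((q.factorial : ℂ)) ≠ 0 := Nat.cast_ne_zero.mpr q.factorial_ne_zero
    simp only [Finset.sum_range_one, smul_eq_mul, Nat.choose_self, Nat.cast_one, pow_zero,
      Nat.sub_zero, Nat.add_zero, one_mul, mul_one, Nat.factorial_zero, zero_add]
    field_simp
  | succ j ih =>
    intro q
    have hj1 : ((j:ℂ)+1) ≠ 0 := Nat.cast_add_one_ne_zero j
    have hder : ∀ z ∈ sphere x₁ ε, HasDerivAt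
        (fun z => Complex.exp (μ * z) * ((z - x₁)^(j+1))⁻¹ * ((z - x₂)^(q+1))⁻¹)
        (μ * (Complex.exp (μ * z) / ((z - x₁)^(j+1) * (z - x₂)^(q+1)))
          - ((j:ℂ)+1) * (Complex.exp (μ * z) / ((z - x₁)^(j+1+1) * (z - x₂)^(q+1)))
          - ((q:ℂ)+1) * (Complex.exp (μ * z) / ((z - x₁)^(j+1) * (z - x₂)^(q+1+1)))) z := by
      intro z hz
      have hz1 : z - x₁ ≠ 0 := sub_ne_zero.mpr (hsphere1 z hz)
      have hz2 : z - x₂ ≠ 0 := sub_ne_zero.mpr (hsphere2 z hz)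
      have he : HasDerivAt (fun z : ℂ => Complex.exp (μ * z)) (μ * Complex.exp (μ * z)) z := by
        simpa [mul_comm] using ((hasDerivAt_id z).const_mul μ).cexp
      have hp1 : HasDerivAt (fun z : ℂ => ((z - x₁)^(j+1))⁻¹)
          (-(((j:ℂ)+1) * ((z - x₁)^(j+2))⁻¹)) z := by
        have hb : HasDerivAt (fun z : ℂ => (z - x₁)^(j+1)) (((j:ℂ)+1) * (z - x₁)^j) z := by
          have h1 : HasDerivAt (fun z : ℂ => z - x₁) 1 z := (hasDerivAt_id z).sub_const x₁
          have := (hasDerivAt_pow (j+1) (z - x₁)).comp z h1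
          simpa [Function.comp_def] using this
        have := hb.inv (pow_ne_zero _ hz1)
        rwa [BA_inv_pow_helper hz1 j (((j:ℂ)+1))] at this
      have hp2 : HasDerivAt (fun z : ℂ => ((z - x₂)^(q+1))⁻¹)
          (-(((q:ℂ)+1) * ((z - x₂)^(q+2))⁻¹)) z := by
        have hb : HasDerivAt (fun z : ℂ => (z - x₂)^(q+1)) (((q:ℂ)+1) * (z - x₂)^q) z := by
          have h1 : HasDerivAt (fun z : ℂ => z - x₂) 1 z := (hasDerivAt_id z).sub_const x₂
          have := (hasDerivAt_pow (q+1) (z - x₂)).comp z h1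
          simpa [Function.comp_def] using this
        have := hb.inv (pow_ne_zero _ hz2)
        rwa [BA_inv_pow_helper hz2 q (((q:ℂ)+1))] at this
      have hprod := (he.mul hp1).mul hp2
      refine hprod.congr_deriv ?_
      have e1 : j+1+1 = j+2 := rfl
      have e2 : q+1+1 = q+2 := rfl
      rw [e1, e2]
      simp only [div_eq_mul_inv, mul_inv, Pi.mul_apply]
      ring
    have hcontd : ContinuousOn (fun z =>
        μ * (Complex.exp (μ * z) / ((z - x₁)^(j+1) * (z - x₂)^(q+1)))
          - ((j:ℂ)+1) * (Complex.exp (μ * z) / ((z - x₁)^(j+1+1) * (z - x₂)^(q+1)))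
          - ((q:ℂ)+1) * (Complex.exp (μ * z) / ((z - x₁)^(j+1) * (z - x₂)^(q+1+1))))
        (sphere x₁ ε) :=
      (((hcont j q).const_smul μ).sub ((hcont (j+1) q).const_smul (((j:ℂ)+1)))).sub
        ((hcont j (q+1)).const_smul (((q:ℂ)+1)))
    have hzero := BA_circle_primitive x₁ hε _ _ hder hcontd
    have hIa : CircleIntegrable (fun z =>
        μ * (Complex.exp (μ * z) / ((z - x₁)^(j+1) * (z - x₂)^(q+1)))) x₁ ε := by
      exact ((hcont j q).const_smul μ).circleIntegrable hε.le
    have hIb : CircleIntegrable (fun z =>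
        ((j:ℂ)+1) * (Complex.exp (μ * z) / ((z - x₁)^(j+1+1) * (z - x₂)^(q+1)))) x₁ ε := by
      exact ((hcont (j+1) q).const_smul (((j:ℂ)+1))).circleIntegrable hε.le
    have hIc : CircleIntegrable (fun z =>
        ((q:ℂ)+1) * (Complex.exp (μ * z) / ((z - x₁)^(j+1) * (z - x₂)^(q+1+1)))) x₁ ε := by
      exact ((hcont j (q+1)).const_smul (((q:ℂ)+1))).circleIntegrable hε.le
    have e1 : (∮ z in C(x₁, ε), μ * (Complex.exp (μ * z) / ((z - x₁)^(j+1) * (z - x₂)^(q+1))))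
        = μ * ∮ z in C(x₁, ε), Complex.exp (μ * z) / ((z - x₁)^(j+1) * (z - x₂)^(q+1)) := by
      simpa only [smul_eq_mul] using circleIntegral.integral_smul μ
        (fun z => Complex.exp (μ * z) / ((z - x₁)^(j+1) * (z - x₂)^(q+1))) x₁ ε
    have e2 : (∮ z in C(x₁, ε), ((j:ℂ)+1) * (Complex.exp (μ * z) / ((z - x₁)^(j+1+1) * (z - x₂)^(q+1))))
        = ((j:ℂ)+1) * ∮ z in C(x₁, ε), Complex.exp (μ * z) / ((z - x₁)^(j+1+1) * (z - x₂)^(q+1)) := by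
      simpa only [smul_eq_mul] using circleIntegral.integral_smul (((j:ℂ)+1))
        (fun z => Complex.exp (μ * z) / ((z - x₁)^(j+1+1) * (z - x₂)^(q+1))) x₁ ε
    have e3 : (∮ z in C(x₁, ε), ((q:ℂ)+1) * (Complex.exp (μ * z) / ((z - x₁)^(j+1) * (z - x₂)^(q+1+1))))
        = ((q:ℂ)+1) * ∮ z in C(x₁, ε), Complex.exp (μ * z) / ((z - x₁)^(j+1) * (z - x₂)^(q+1+1)) := by
      simpa only [smul_eq_mul] using circleIntegral.integral_smul (((q:ℂ)+1))
        (fun z => Complex.exp (μ * z) / ((z - x₁)^(j+1) * (z - x₂)^(q+1+1))) x₁ ε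
    have hsplit : (∮ z in C(x₁, ε),
        (μ * (Complex.exp (μ * z) / ((z - x₁)^(j+1) * (z - x₂)^(q+1)))
          - ((j:ℂ)+1) * (Complex.exp (μ * z) / ((z - x₁)^(j+1+1) * (z - x₂)^(q+1)))
          - ((q:ℂ)+1) * (Complex.exp (μ * z) / ((z - x₁)^(j+1) * (z - x₂)^(q+1+1)))))
        = μ * (∮ z in C(x₁, ε), Complex.exp (μ * z) / ((z - x₁)^(j+1) * (z - x₂)^(q+1)))
          - ((j:ℂ)+1) * (∮ z in C(x₁, ε), Complex.exp (μ * z) / ((z - x₁)^(j+1+1) * (z - x₂)^(q+1)))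
          - ((q:ℂ)+1) * (∮ z in C(x₁, ε), Complex.exp (μ * z) / ((z - x₁)^(j+1) * (z - x₂)^(q+1+1))) := by
      have hIab : CircleIntegrable (fun z =>
          μ * (Complex.exp (μ * z) / ((z - x₁)^(j+1) * (z - x₂)^(q+1)))
            - ((j:ℂ)+1) * (Complex.exp (μ * z) / ((z - x₁)^(j+1+1) * (z - x₂)^(q+1)))) x₁ ε := by
        refine ContinuousOn.circleIntegrable hε.le ?_
        exact ((hcont j q).const_smul μ).sub ((hcont (j+1) q).const_smul (((j:ℂ)+1)))
      rw [circleIntegral.integral_sub hIab hIc,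
        circleIntegral.integral_sub hIa hIb, e1, e2, e3]
    rw [hsplit] at hzero
    have hmain : (∮ z in C(x₁, ε), Complex.exp (μ * z) / ((z - x₁)^(j+1+1) * (z - x₂)^(q+1)))
        = (μ * (∮ z in C(x₁, ε), Complex.exp (μ * z) / ((z - x₁)^(j+1) * (z - x₂)^(q+1)))
          - ((q:ℂ)+1) * (∮ z in C(x₁, ε), Complex.exp (μ * z) / ((z - x₁)^(j+1) * (z - x₂)^(q+1+1))))
          / ((j:ℂ)+1) := by
      rw [eq_div_iff hj1]
      linear_combination -hzero
    rw [hmain, ih q, ih (q+1)]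
    have hpas' : (∑ i ∈ Finset.range (j+1+1), (((j+1).choose i : ℕ) : ℂ) * μ^(j+1-i) * (-1)^i *
          ((q+i).factorial : ℂ) * ((x₁ - x₂)^(q+1+i))⁻¹)
        = μ * (∑ i ∈ Finset.range (j+1), ((j.choose i : ℕ) : ℂ) * μ^(j-i) * (-1)^i *
            ((q+i).factorial : ℂ) * ((x₁ - x₂)^(q+1+i))⁻¹)
          - ∑ i ∈ Finset.range (j+1), ((j.choose i : ℕ) : ℂ) * μ^(j-i) * (-1)^i *
            (((q+1)+i).factorial : ℂ) * ((x₁ - x₂)^((q+1)+1+i))⁻¹ := by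
      have := BA_pascal μ j q (fun i => ((x₁ - x₂)^(q+1+i))⁻¹)
      rw [show j+1+1 = j+2 from rfl]
      rw [this]
      congr 1
      refine Finset.sum_congr rfl fun i _ => ?_
      have h2 : q+1+(i+1) = (q+1)+1+i := by omega
      rw [h2]
    rw [hpas']
    have hfj : ((j.factorial : ℂ)) ≠ 0 := Nat.cast_ne_zero.mpr j.factorial_ne_zero
    have hfq : ((q.factorial : ℂ)) ≠ 0 := Nat.cast_ne_zero.mpr q.factorial_ne_zero
    have hq1 : ((q:ℂ)+1) ≠ 0 := Nat.cast_add_one_ne_zero q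
    have gfact : (((j+1).factorial : ℂ)) = ((j:ℂ)+1) * (j.factorial : ℂ) := by
      push_cast [Nat.factorial_succ]
      ring
    have gfactq : (((q+1).factorial : ℂ)) = ((q:ℂ)+1) * (q.factorial : ℂ) := by
      push_cast [Nat.factorial_succ]
      ring
    rw [gfact, gfactq]
    field_simp

private lemma BA_div_sign (k : ℕ) (X Y : ℂ) : X / ((-1)^k * Y) = (-1)^k * (X / Y) := by
  rcases Nat.even_or_odd k with h|h
  · rw [h.neg_one_pow]
    simp
  · rw [h.neg_one_pow]
    simp [div_neg]


/-- The Selberg-type integral representation and the iterated-residue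
representation of the two-particle rational Baker–Akhiezer function agree.
The integral is over the ray `z = x₁ + t`, `t ∈ [0,∞)`; the residue at the
pole of order `m+1` at `z = x₁` is expressed as `(2πi)⁻¹` times the integral
over a small circle around `x₁` not containing `x₂`. -/
theorem selberg_eq_residue_Psi2 (m : ℕ) (hm : 0 < m) (x₁ x₂ lam₁ lam₂ : ℂ)
    (hx : x₁ ≠ x₂) (hre : (lam₁ - lam₂).re < 0) (hl : lam₁ ≠ lam₂)
    (ε : ℝ) (hε : 0 < ε) (hε' : ε < ‖x₁ - x₂‖) :
    (lam₂ - lam₁) ^ (m + 1) / ((m.factorial : ℂ) * (x₁ - x₂) ^ m)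
        * (∫ t in Set.Ioi (0 : ℝ),
            ((x₁ + t) - x₁) ^ m * ((x₁ + t) - x₂) ^ m
              * Complex.exp ((lam₁ - lam₂) * (x₁ + t)))
      = (m.factorial : ℂ) * (x₁ - x₂) ^ (m + 1) / (lam₁ - lam₂) ^ m
          * ((2 * Real.pi * Complex.I)⁻¹ *
              ∮ z in C(x₁, ε),
                Complex.exp ((lam₁ - lam₂) * z)
                  / ((z - x₁) ^ (m + 1) * (z - x₂) ^ (m + 1))) := by
  set μ := lam₁ - lam₂ with hμdef
  have hμre : μ.re < 0 := hre
  have hμ0 : μ ≠ 0 := sub_ne_zero.mpr hl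
  have hνμ0 : -μ ≠ 0 := neg_ne_zero.mpr hμ0
  have ha0 : x₁ - x₂ ≠ 0 := sub_ne_zero.mpr hx
  have hνμ : lam₂ - lam₁ = -μ := by rw [hμdef]; ring
  have hM0 : ((m.factorial : ℕ) : ℂ) ≠ 0 := Nat.cast_ne_zero.mpr m.factorial_ne_zero
  have hπ : (2 * (Real.pi : ℂ) * Complex.I) ≠ 0 := by
    simp [Real.pi_ne_zero, Complex.I_ne_zero, Complex.ofReal_ne_zero]
  clear_value μ
  -- evaluate the ray integral
  have hfun : ∀ t : ℝ, ((x₁ + t) - x₁)^m * ((x₁ + t) - x₂)^m * Complex.exp (μ * (x₁ + t))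
      = ∑ k ∈ Finset.range (m+1), ((m.choose k : ℕ) : ℂ) * (x₁ - x₂)^(m-k) *
          Complex.exp (μ * x₁) * ((t:ℂ)^(m+k) * Complex.exp (μ * t)) := by
    intro t
    have h1 : ((x₁ + t) - x₁) = (t:ℂ) := by ring
    have h2 : ((x₁ + t) - x₂) = (t:ℂ) + (x₁ - x₂) := by ring
    rw [h1, h2, add_pow, mul_add, Complex.exp_add, Finset.mul_sum, Finset.sum_mul]
    refine Finset.sum_congr rfl fun k hk => ?_
    ring
  have hint : (∫ t in Set.Ioi (0:ℝ),
      ((x₁ + t) - x₁)^m * ((x₁ + t) - x₂)^m * Complex.exp (μ * (x₁ + t)))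
      = ∑ k ∈ Finset.range (m+1), ((m.choose k : ℕ):ℂ) * (x₁ - x₂)^(m-k) *
          Complex.exp (μ * x₁) *
          ((-1)^k * (((m+k).factorial : ℂ) / ((-μ)^(m+1) * μ^k))) := by
    rw [show (∫ t in Set.Ioi (0:ℝ),
        ((x₁ + t) - x₁)^m * ((x₁ + t) - x₂)^m * Complex.exp (μ * (x₁ + t)))
        = ∫ t in Set.Ioi (0:ℝ), ∑ k ∈ Finset.range (m+1),
            ((m.choose k : ℕ) : ℂ) * (x₁ - x₂)^(m-k) * Complex.exp (μ * x₁) *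
            ((t:ℂ)^(m+k) * Complex.exp (μ * t)) from by simp only [hfun]]
    rw [MeasureTheory.integral_finset_sum _
      (fun k _ => (BA_integrable (m+k) hμre).const_mul _)]
    refine Finset.sum_congr rfl fun k _ => ?_
    rw [MeasureTheory.integral_const_mul, BA_J hμre (m+k)]
    have h1 : ((-μ):ℂ)^(m+k+1) = (-μ)^(m+1) * ((-1)^k * μ^k) := by
      calc ((-μ):ℂ)^(m+k+1) = (-μ)^(m+1) * (-μ)^k := by rw [← pow_add]; congr 1; omega
        _ = (-μ)^(m+1) * ((-1)^k * μ^k) := by rw [neg_pow μ k]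
    rw [h1, mul_left_comm, BA_div_sign]
  rw [hint, BA_circle x₁ x₂ μ hε hε' m m, hνμ]
  rw [show (2 * (Real.pi:ℂ) * Complex.I)⁻¹ * (2 * (Real.pi:ℂ) * Complex.I *
      Complex.exp (μ * x₁) * (((m.factorial : ℕ):ℂ) * ((m.factorial : ℕ):ℂ))⁻¹ *
      ∑ i ∈ Finset.range (m+1), ((m.choose i : ℕ) : ℂ) * μ^(m-i) * (-1)^i *
        ((m+i).factorial : ℂ) * ((x₁ - x₂)^(m+1+i))⁻¹)
      = Complex.exp (μ * x₁) * (((m.factorial : ℕ):ℂ) * ((m.factorial : ℕ):ℂ))⁻¹ *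
      ∑ i ∈ Finset.range (m+1), ((m.choose i : ℕ) : ℂ) * μ^(m-i) * (-1)^i *
        ((m+i).factorial : ℂ) * ((x₁ - x₂)^(m+1+i))⁻¹ from by
    rw [← mul_assoc, ← mul_assoc, ← mul_assoc, inv_mul_cancel₀ hπ, one_mul]]
  simp only [Finset.mul_sum]
  refine Finset.sum_congr rfl fun k hk => ?_
  obtain ⟨d, hd⟩ : ∃ d, m = k + d := ⟨m - k, by have := Finset.mem_range.mp hk; omega⟩
  subst hd
  simp only [Nat.add_sub_cancel_left]
  have hs : ((-1:ℂ))^k ≠ 0 := pow_ne_zero k (by norm_num)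
  have hKfac : (((k+d+k).factorial : ℕ) : ℂ) ≠ 0 :=
    Nat.cast_ne_zero.mpr (k+d+k).factorial_ne_zero
  trans (Complex.exp (μ*x₁) * ((((k+d).choose k : ℕ)):ℂ) * ((((k+d+k).factorial : ℕ)):ℂ) *
      (((((k+d).factorial : ℕ)):ℂ))⁻¹ * ((-1:ℂ)^k * (μ^k)⁻¹) * ((x₁ - x₂)^k)⁻¹)
  · field_simp [hμ0, hνμ0, ha0, hM0, hs]
    ring
  · field_simp [hμ0, ha0, hM0, hs]
    ring
end

section
/- For m = 1 and k = 1: with x₁ ≠ x₂ and λ₁ ≠ λ₂, (m!/2πi) · ∮_{|z−x₁|=ε} [(x₁−x₂)² / ((z−x₁)²(z−x₂)²)] e^{λ₂(x₁+x₂−z)} e^{λ₁ z} dz · (λ₁−λ₂)^{−1} = (1 − 2/((λ₁−λ₂)(x₁−x₂))) e^{λ₁x₁+λ₂x₂}. -/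
open Complex

/-- The adding-particle residue formula instantiated at `k = m = 1` with
`Ψ^{(1)}_1(z, λ₁) = e^{λ₁ z}`, identified with the explicit form of
`Ψ^{(2)}_1`.  The contour is a small positively oriented circle around `x₁`
not containing `x₂` (note `1! = 1`). -/
theorem adding_particle_k_one_m_one (x₁ x₂ lam₁ lam₂ : ℂ)
    (hx : x₁ ≠ x₂) (hl : lam₁ ≠ lam₂)
    (ε : ℝ) (hε : 0 < ε) (hε' : ε < ‖x₁ - x₂‖) :
    (2 * Real.pi * Complex.I)⁻¹ *
        (∮ z in C(x₁, ε),
          (x₁ - x₂) ^ 2 / ((z - x₁) ^ 2 * (z - x₂) ^ 2)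
            * Complex.exp (lam₂ * (x₁ + x₂ - z)) * Complex.exp (lam₁ * z))
        * (lam₁ - lam₂)⁻¹
      = (1 - 2 / ((lam₁ - lam₂) * (x₁ - x₂))) * Complex.exp (lam₁ * x₁ + lam₂ * x₂) := by
  set g : ℂ → ℂ := fun z =>
    (x₁ - x₂) ^ 2 / (z - x₂) ^ 2 * Complex.exp (lam₂ * (x₁ + x₂ - z))
      * Complex.exp (lam₁ * z) with hg
  have hx₂ : ∀ z ∈ Metric.closedBall x₁ ε, z - x₂ ≠ 0 := by
    intro z hz h0
    rw [Metric.mem_closedBall] at hz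
    have : dist z x₂ = 0 := by simpa [Complex.dist_eq] using congrArg (‖·‖) h0
    have : dist x₁ x₂ ≤ ε := by
      calc dist x₁ x₂ ≤ dist x₁ z + dist z x₂ := dist_triangle _ _ _
        _ ≤ ε + 0 := by rw [this]; gcongr; rwa [dist_comm]
        _ = ε := by ring
    have hd : dist x₁ x₂ = ‖x₁ - x₂‖ := Complex.dist_eq _ _
    linarith [hε', hd ▸ this]
  have hdiff : DifferentiableOn ℂ g (Metric.closedBall x₁ ε) := by
    intro z hz
    apply DifferentiableWithinAt.mul
    apply DifferentiableWithinAt.mul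
    · exact (differentiableWithinAt_const _).div (by fun_prop) (pow_ne_zero _ (hx₂ z hz))
    · fun_prop
    · fun_prop
  have hderiv : HasDerivAt g
      (((lam₁ - lam₂) - 2 / (x₁ - x₂)) * (Complex.exp (lam₂ * x₂) * Complex.exp (lam₁ * x₁))) x₁ := by
    have hne : x₁ - x₂ ≠ 0 := sub_ne_zero.mpr hx
    have hu : HasDerivAt (fun z => (x₁ - x₂) ^ 2 / (z - x₂) ^ 2)
        (-(2 : ℂ) / (x₁ - x₂)) x₁ := by
      have h1 : HasDerivAt (fun z : ℂ => (z - x₂) ^ 2) (2 * (x₁ - x₂)) x₁ := by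
        have := ((hasDerivAt_id x₁).sub_const x₂).fun_pow 2
        simpa using this
      have h0 : (x₁ - x₂) ^ 2 ≠ 0 := pow_ne_zero 2 hne
      have := (hasDerivAt_const x₁ ((x₁ - x₂) ^ 2)).div h1 h0
      refine this.congr_deriv ?_
      field_simp
      ring
    have hv : HasDerivAt (fun z => Complex.exp (lam₂ * (x₁ + x₂ - z)))
        (-lam₂ * Complex.exp (lam₂ * x₂)) x₁ := by
      have h1 : HasDerivAt (fun z : ℂ => lam₂ * (x₁ + x₂ - z)) (-lam₂) x₁ := by
        have := (((hasDerivAt_id x₁).const_sub (x₁ + x₂))).const_mul lam₂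
        simpa using this
      have := h1.cexp
      simpa [mul_comm, mul_add, add_sub_cancel_left] using this
    have hw : HasDerivAt (fun z => Complex.exp (lam₁ * z))
        (lam₁ * Complex.exp (lam₁ * x₁)) x₁ := by
      have := ((hasDerivAt_id x₁).const_mul lam₁).cexp
      simpa [mul_comm] using this
    have := (hu.fun_mul hv).fun_mul hw
    refine this.congr_deriv ?_
    have : (x₁ - x₂) ^ 2 / (x₁ - x₂) ^ 2 = 1 := div_self (pow_ne_zero 2 hne)
    rw [this]
    ring
  have hdiff' : DiffContOnCl ℂ g (Metric.ball x₁ ε) := by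
    apply DifferentiableOn.diffContOnCl
    rwa [closure_ball x₁ hε.ne']
  have key : deriv g x₁ = (2 * ↑Real.pi * Complex.I : ℂ)⁻¹ • ∮ z in C(x₁, ε), (z - x₁) ^ (-2 : ℤ) • g z := by
    have h := hdiff'.deriv_eq_smul_circleIntegral hε
    have hf : (fun z => (z - x₁) ^ (-2 : ℤ) • g z) = fun z => (1 / (z - x₁) ^ 2) • g z := by
      funext z; simp [zpow_neg]
    rw [hf, h, smul_smul, inv_mul_cancel₀ Complex.two_pi_I_ne_zero, one_smul]
  have hdg : deriv g x₁ = ((lam₁ - lam₂) - 2 / (x₁ - x₂)) * (Complex.exp (lam₂ * x₂) * Complex.exp (lam₁ * x₁)) := hderiv.deriv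
  have hint : (∮ z in C(x₁, ε),
          (x₁ - x₂) ^ 2 / ((z - x₁) ^ 2 * (z - x₂) ^ 2)
            * Complex.exp (lam₂ * (x₁ + x₂ - z)) * Complex.exp (lam₁ * z))
      = ∮ z in C(x₁, ε), (z - x₁) ^ (-2 : ℤ) • g z := by
    apply circleIntegral.integral_congr hε.le
    intro z hz
    simp only [hg, smul_eq_mul, zpow_neg, zpow_two]
    field_simp
  rw [hint, show ((2 : ℂ) * Real.pi * Complex.I)⁻¹ *
      (∮ z in C(x₁, ε), (z - x₁) ^ (-2 : ℤ) • g z)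
      = (2 * ↑Real.pi * Complex.I : ℂ)⁻¹ • ∮ z in C(x₁, ε), (z - x₁) ^ (-2 : ℤ) • g z from rfl,
    ← key, hdg]
  have hne : x₁ - x₂ ≠ 0 := sub_ne_zero.mpr hx
  have hlne : lam₁ - lam₂ ≠ 0 := sub_ne_zero.mpr hl
  rw [← Complex.exp_add]
  field_simp
  ring
end
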